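/- arXiv:2405.09766 — 5 statements merged into one kernel-verified Lean document; each statement's English description precedes it below -/
import Mathlib

section
/- Let X be a Banach lattice and ρ : X → ℝ a convex functional that is bounded above on every order interval [U,V] = {Z : U ≤ Z ≤ V}. Then ρ is norm continuous. -/
/-- A convex functional on a Banach lattice that is bounded above on every
order interval is norm continuous. -/
theorem convex_orderBoundedAbove_continuous
    {X : Type*} [NormedAddCommGroup X] [Lattice X] [HasSolidNorm X] [IsOrderedAddMonoid X] [NormedSpace ℝ X] [CompleteSpace X]
    (ρ : X → ℝ) (hconv : ConvexOn ℝ Set.univ ρ)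
    (hbdd : ∀ U V : X, U ≤ V → ∃ M : ℝ, ∀ Z ∈ Set.Icc U V, ρ Z ≤ M) :
    Continuous ρ := by
  -- It suffices to show ρ is bounded above on a neighborhood of some point.
  have key : ∃ x₀ : X, x₀ ∈ Set.univ ∧ (nhds x₀).IsBoundedUnder (· ≤ ·) ρ := by
    refine ⟨0, Set.mem_univ _, ?_⟩
    by_contra h
    -- extract a sequence x n with ‖x n‖ < 2⁻ⁿ and ρ (x n) > n
    have hx : ∀ n : ℕ, ∃ x : X, ‖x‖ < (1/2 : ℝ) ^ n ∧ (n : ℝ) < ρ x := by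
      intro n
      by_contra hc
      push_neg at hc
      exact h ⟨(n : ℝ), Filter.eventually_map.mpr <| Filter.eventually_iff_exists_mem.2
        ⟨Metric.ball 0 ((1/2 : ℝ) ^ n), Metric.ball_mem_nhds _ (by positivity),
          fun y hy => hc y (by simpa using hy)⟩⟩
    choose x hxnorm hxρ using hx
    have hsum : Summable fun n => |x n| := by
      apply Summable.of_norm_bounded (g := fun n => (1/2 : ℝ) ^ n) (summable_geometric_of_lt_one
        (by norm_num) (by norm_num))
      intro n
      rw [norm_abs_eq_norm]
      exact (hxnorm n).le
    set Y : X := ∑' n, |x n| with hY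
    have hle : ∀ n, |x n| ≤ Y := fun n => Summable.le_tsum hsum n fun j _ => abs_nonneg _
    have hY0 : (0 : X) ≤ Y := tsum_nonneg fun n => abs_nonneg _
    obtain ⟨M, hM⟩ := hbdd (-Y) Y (neg_le_self hY0)
    obtain ⟨n, hn⟩ := exists_nat_gt M
    have hmem : x n ∈ Set.Icc (-Y) Y :=
      ⟨neg_le.mp ((neg_le_abs (x n)).trans (hle n)),
        (le_abs_self (x n)).trans (hle n)⟩
    exact absurd (hM (x n) hmem) (not_le.mpr (hn.trans (hxρ n)))
  have := (hconv.continuousOn_tfae isOpen_univ Set.univ_nonempty).out 3 1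
  exact continuousOn_univ.mp (this.mp key)
end

section
/- Let Φ be an Orlicz function and (X_n), X random variables in the Young class Y^Φ. If X_n → X a.s. and E[Φ(|X_n|)] → E[Φ(|X|)], then there is a subsequence (X_{n_k}) which is dominated in Y^Φ, i.e., sup_k |X_{n_k}| ∈ Y^Φ; consequently X_{n_k} order converges to X in Y^Φ. -/
open MeasureTheory Filter

/-- An Orlicz function: convex, increasing, non-constant, with `Φ(0) = 0`. -/
structure IsOrliczFunction (Φ : ℝ → ℝ) : Prop where
  convexOn : ConvexOn ℝ (Set.Ici 0) Φ
  monotoneOn : MonotoneOn Φ (Set.Ici 0)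
  map_zero : Φ 0 = 0
  nonconst : ∃ x : ℝ, 0 ≤ x ∧ Φ x ≠ 0


variable {Φ : ℝ → ℝ}

lemma orlicz_nonneg (hΦ : IsOrliczFunction Φ) {x : ℝ} (hx : 0 ≤ x) : 0 ≤ Φ x := by
  have := hΦ.monotoneOn (Set.self_mem_Ici) hx hx
  rwa [hΦ.map_zero] at this

lemma orlicz_exists_pos (hΦ : IsOrliczFunction Φ) : ∃ x : ℝ, 0 < x ∧ 0 < Φ x := by
  obtain ⟨x, hx, hne⟩ := hΦ.nonconst
  have hpos : 0 < Φ x := lt_of_le_of_ne (orlicz_nonneg hΦ hx) (Ne.symm hne)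
  refine ⟨x, ?_, hpos⟩
  rcases hx.lt_or_eq with h | h
  · exact h
  · exact absurd (h ▸ hΦ.map_zero.symm ▸ rfl : Φ x = 0) hne

lemma orlicz_le_of_le (hΦ : IsOrliczFunction Φ) {t x₁ : ℝ} (hx₁ : 0 < x₁)
    (h0t : 0 ≤ t) (htx : t ≤ x₁) : Φ t ≤ t / x₁ * Φ x₁ := by
  have ha : (0:ℝ) ≤ 1 - t / x₁ := by
    have : t / x₁ ≤ 1 := (div_le_one hx₁).mpr htx; linarith
  have h := hΦ.convexOn.2 (Set.self_mem_Ici) (Set.mem_Ici.mpr hx₁.le)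
    ha (div_nonneg h0t hx₁.le) (by ring)
  simpa [hΦ.map_zero, smul_eq_mul, div_mul_cancel₀ _ hx₁.ne'] using h

lemma orlicz_ge_of_ge (hΦ : IsOrliczFunction Φ) {t x₁ : ℝ} (hx₁ : 0 < x₁)
    (ht : x₁ ≤ t) : t / x₁ * Φ x₁ ≤ Φ t := by
  have htpos : 0 < t := hx₁.trans_le ht
  have ha : (0:ℝ) ≤ 1 - x₁ / t := by
    have : x₁ / t ≤ 1 := (div_le_one htpos).mpr ht; linarith
  have h := hΦ.convexOn.2 (Set.self_mem_Ici) (Set.mem_Ici.mpr htpos.le)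
    ha (div_nonneg hx₁.le htpos.le) (by ring)
  have h' : Φ x₁ ≤ x₁ / t * Φ t := by
    simpa [hΦ.map_zero, smul_eq_mul, div_mul_cancel₀ _ htpos.ne'] using h
  have := mul_le_mul_of_nonneg_left h' (le_of_lt (div_pos htpos hx₁))
  calc t / x₁ * Φ x₁ ≤ t / x₁ * (x₁ / t * Φ t) := this
    _ = Φ t := by field_simp

lemma orlicz_cwa (hΦ : IsOrliczFunction Φ) {x : ℝ} (hx : 0 ≤ x) :
    Filter.Tendsto Φ (nhdsWithin x (Set.Ici 0)) (nhds (Φ x)) := by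
  rcases hx.lt_or_eq with hpos | hzero
  · have hco : ContinuousOn Φ (interior (Set.Ici (0:ℝ))) :=
      hΦ.convexOn.continuousOn_interior
    rw [interior_Ici] at hco
    exact (hco.continuousAt (Ioi_mem_nhds hpos)).continuousWithinAt
  · subst hzero
    obtain ⟨x₁, hx₁, hΦx₁⟩ := orlicz_exists_pos hΦ
    rw [hΦ.map_zero]
    apply tendsto_of_tendsto_of_tendsto_of_le_of_le'
      (g := fun _ : ℝ => (0:ℝ)) (h := fun t => t / x₁ * Φ x₁)
    · exact tendsto_const_nhds
    · have : Tendsto (fun t : ℝ => t / x₁ * Φ x₁) (nhds 0) (nhds (0 / x₁ * Φ x₁)) :=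
        ((continuous_id.div_const x₁).mul continuous_const).tendsto 0
      simpa using this.mono_left nhdsWithin_le_nhds
    · filter_upwards [self_mem_nhdsWithin] with t ht
      exact orlicz_nonneg hΦ ht
    · filter_upwards [self_mem_nhdsWithin,
        eventually_nhdsWithin_of_eventually_nhds (eventually_le_nhds hx₁)] with t ht htx
      exact orlicz_le_of_le hΦ hx₁ ht htx

lemma orlicz_measurable (hΦ : IsOrliczFunction Φ) :
    Measurable (fun x => Φ (max x 0)) := by
  apply Monotone.measurable
  intro a b hab
  exact hΦ.monotoneOn (Set.mem_Ici.mpr (le_max_right _ _))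
    (Set.mem_Ici.mpr (le_max_right _ _)) (max_le_max hab le_rfl)

/-- If `X_n, X` lie in the Young class `Y^Φ`, `X_n → X` a.s. and
`E[Φ(|X_n|)] → E[Φ(|X|)]`, then some subsequence is dominated in `Y^Φ`, hence
order converges to `X` in `Y^Φ`. -/
theorem young_dominated_subsequence
    {Ω : Type*} [MeasurableSpace Ω] (μ : Measure Ω) [IsProbabilityMeasure μ]
    (Φ : ℝ → ℝ) (hΦ : IsOrliczFunction Φ)
    (X : ℕ → Ω → ℝ) (X₀ : Ω → ℝ)
    (hXm : ∀ n, Measurable (X n)) (hX₀m : Measurable X₀)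
    (hint : ∀ n, Integrable (fun ω => Φ (|X n ω|)) μ)
    (hint₀ : Integrable (fun ω => Φ (|X₀ ω|)) μ)
    (has : ∀ᵐ ω ∂μ, Tendsto (fun n => X n ω) atTop (nhds (X₀ ω)))
    (hmom : Tendsto (fun n => ∫ ω, Φ (|X n ω|) ∂μ) atTop
      (nhds (∫ ω, Φ (|X₀ ω|) ∂μ))) :
    ∃ φ : ℕ → ℕ, StrictMono φ ∧
      (∃ Y : Ω → ℝ, Integrable (fun ω => Φ (|Y ω|)) μ ∧
        ∀ k, ∀ᵐ ω ∂μ, |X (φ k) ω| ≤ Y ω) ∧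
      (∀ᵐ ω ∂μ, Tendsto (fun k => X (φ k) ω) atTop (nhds (X₀ ω))) := by
  obtain ⟨x₁, hx₁pos, hΦx₁pos⟩ := orlicz_exists_pos hΦ
  -- measurability of the composed functions
  have hcomp : ∀ Z : Ω → ℝ, Measurable Z → Measurable (fun ω => Φ (|Z ω|)) := by
    intro Z hZ
    have : (fun ω => Φ (|Z ω|)) = (fun x => Φ (max x 0)) ∘ fun ω => |Z ω| := by
      funext ω; simp [max_eq_left (abs_nonneg (Z ω))]
    rw [this]
    exact (orlicz_measurable hΦ).comp hZ.abs
  have hgm : ∀ n, Measurable (fun ω => Φ (|X n ω|)) := fun n => hcomp _ (hXm n)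
  have hg₀m : Measurable (fun ω => Φ (|X₀ ω|)) := hcomp _ hX₀m
  have hgnn : ∀ n ω, 0 ≤ Φ (|X n ω|) := fun n ω => orlicz_nonneg hΦ (abs_nonneg _)
  have hg₀nn : ∀ ω, 0 ≤ Φ (|X₀ ω|) := fun ω => orlicz_nonneg hΦ (abs_nonneg _)
  -- a.e. convergence of Φ(|X n|)
  have hgconv : ∀ᵐ ω ∂μ, Tendsto (fun n => Φ (|X n ω|)) atTop (nhds (Φ (|X₀ ω|))) := by
    filter_upwards [has] with ω hω
    have habs : Tendsto (fun n => |X n ω|) atTop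
        (nhdsWithin (|X₀ ω|) (Set.Ici 0)) :=
      tendsto_nhdsWithin_of_tendsto_nhds_of_eventually_within _ hω.abs
        (Eventually.of_forall fun n => Set.mem_Ici.mpr (abs_nonneg _))
    exact (orlicz_cwa hΦ (abs_nonneg _)).comp habs
  -- min integrability and DCT
  have hminm : ∀ n, Measurable (fun ω => min (Φ (|X n ω|)) (Φ (|X₀ ω|))) :=
    fun n => (hgm n).min hg₀m
  have hmin_tendsto : Tendsto (fun n => ∫ ω, min (Φ (|X n ω|)) (Φ (|X₀ ω|)) ∂μ) atTop
      (nhds (∫ ω, Φ (|X₀ ω|) ∂μ)) := by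
    apply tendsto_integral_of_dominated_convergence (fun ω => Φ (|X₀ ω|))
      (fun n => (hminm n).aestronglyMeasurable) hint₀
    · intro n
      filter_upwards with ω
      rw [Real.norm_eq_abs, abs_of_nonneg (le_min (hgnn n ω) (hg₀nn ω))]
      exact min_le_right _ _
    · filter_upwards [hgconv] with ω hω
      simpa using hω.min (tendsto_const_nhds (x := Φ (|X₀ ω|)))
  have hmin_int : ∀ n, Integrable (fun ω => min (Φ (|X n ω|)) (Φ (|X₀ ω|))) μ := by
    intro n
    refine Integrable.mono' hint₀ (hminm n).aestronglyMeasurable ?_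
    filter_upwards with ω
    rw [Real.norm_eq_abs, abs_of_nonneg (le_min (hgnn n ω) (hg₀nn ω))]
    exact min_le_right _ _
  -- Scheffé: L¹ convergence
  have habsmin : ∀ a b : ℝ, |a - b| = a + b - 2 * min a b := by
    intro a b
    rcases le_total a b with h | h
    · rw [min_eq_left h, abs_of_nonpos (by linarith)]; ring
    · rw [min_eq_right h, abs_of_nonneg (by linarith)]; ring
  have hL1 : Tendsto (fun n => ∫ ω, |Φ (|X n ω|) - Φ (|X₀ ω|)| ∂μ) atTop (nhds 0) := by
    have heq : ∀ n, ∫ ω, |Φ (|X n ω|) - Φ (|X₀ ω|)| ∂μ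
        = (∫ ω, Φ (|X n ω|) ∂μ) + (∫ ω, Φ (|X₀ ω|) ∂μ)
          - 2 * ∫ ω, min (Φ (|X n ω|)) (Φ (|X₀ ω|)) ∂μ := by
      intro n
      have hadd : Integrable (fun ω => Φ (|X n ω|) + Φ (|X₀ ω|)) μ := (hint n).add hint₀
      have h2m : Integrable (fun ω => 2 * min (Φ (|X n ω|)) (Φ (|X₀ ω|))) μ :=
        (hmin_int n).const_mul 2
      calc ∫ ω, |Φ (|X n ω|) - Φ (|X₀ ω|)| ∂μ
          = ∫ ω, (Φ (|X n ω|) + Φ (|X₀ ω|) - 2 * min (Φ (|X n ω|)) (Φ (|X₀ ω|))) ∂μ := by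
            apply integral_congr_ae
            filter_upwards with ω
            exact habsmin _ _
        _ = _ := by
            rw [integral_sub hadd h2m, integral_add (hint n) hint₀, integral_const_mul]
    simp only [heq]
    have h := (hmom.add (tendsto_const_nhds (x := ∫ ω, Φ (|X₀ ω|) ∂μ))).sub
      (hmin_tendsto.const_mul 2)
    have hzero : (∫ ω, Φ (|X₀ ω|) ∂μ) + (∫ ω, Φ (|X₀ ω|) ∂μ)
        - 2 * ∫ ω, Φ (|X₀ ω|) ∂μ = 0 := by ring
    rw [hzero] at h
    exact h
  -- extraction of a rapidly converging subsequence
  obtain ⟨φ, hφmono, hφbound⟩ :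
      ∃ φ : ℕ → ℕ, StrictMono φ ∧
        ∀ n, ∫ ω, |Φ (|X (φ n) ω|) - Φ (|X₀ ω|)| ∂μ ≤ (1 / 2 : ℝ) ^ n := by
    apply extraction_forall_of_eventually
      (P := fun n k => ∫ ω, |Φ (|X k ω|) - Φ (|X₀ ω|)| ∂μ ≤ (1 / 2 : ℝ) ^ n)
    intro n
    exact hL1.eventually (eventually_le_nhds (by positivity))
  have hdiff_int : ∀ k, Integrable (fun ω => |Φ (|X (φ k) ω|) - Φ (|X₀ ω|)|) μ :=
    fun k => ((hint (φ k)).sub hint₀).abs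
  have hlin : ∀ k, ∫⁻ ω, ENNReal.ofReal (|Φ (|X (φ k) ω|) - Φ (|X₀ ω|)|) ∂μ
      ≤ ENNReal.ofReal ((1 / 2 : ℝ) ^ k) := by
    intro k
    rw [← ofReal_integral_eq_lintegral_ofReal (hdiff_int k)
      (Eventually.of_forall fun ω => abs_nonneg _)]
    exact ENNReal.ofReal_le_ofReal (hφbound k)
  -- the majorant in ℝ≥0∞
  set S : Ω → ENNReal := fun ω => ENNReal.ofReal (Φ (|X₀ ω|))
    + ∑' k, ENNReal.ofReal (|Φ (|X (φ k) ω|) - Φ (|X₀ ω|)|) with hSdef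
  have hSm : Measurable S := by
    apply Measurable.add hg₀m.ennreal_ofReal
    exact Measurable.ennreal_tsum fun k => ((hgm (φ k)).sub hg₀m).abs.ennreal_ofReal
  have hgeom : ∑' k : ℕ, ENNReal.ofReal ((1 / 2 : ℝ) ^ k) ≠ ⊤ := by
    rw [← ENNReal.ofReal_tsum_of_nonneg (fun k => by positivity) summable_geometric_two]
    exact ENNReal.ofReal_ne_top
  have hSint : ∫⁻ ω, S ω ∂μ < ⊤ := by
    rw [hSdef]
    rw [lintegral_add_left hg₀m.ennreal_ofReal]
    rw [lintegral_tsum (f := fun k ω => ENNReal.ofReal (|Φ (|X (φ k) ω|) - Φ (|X₀ ω|)|))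
      (fun k => (((hgm (φ k)).sub hg₀m).abs.ennreal_ofReal).aemeasurable)]
    apply ENNReal.add_lt_top.mpr
    constructor
    · rw [← ofReal_integral_eq_lintegral_ofReal hint₀
        (Eventually.of_forall fun ω => hg₀nn ω)]
      exact ENNReal.ofReal_lt_top
    · exact lt_of_le_of_lt (ENNReal.tsum_le_tsum hlin) (lt_of_le_of_ne le_top hgeom)
  have hSfin : ∀ᵐ ω ∂μ, S ω < ⊤ := ae_lt_top hSm hSint.ne
  -- the dominating random variable
  set Y : Ω → ℝ := fun ω => (⨆ k, ENNReal.ofReal (|X (φ k) ω|)).toReal with hYdef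
  have hYm : Measurable Y :=
    (Measurable.iSup fun k => ((hXm (φ k)).abs).ennreal_ofReal).ennreal_toReal
  -- key pointwise facts on the set where S is finite
  have key : ∀ ω, S ω < ⊤ → (∀ k, |X (φ k) ω| ≤ Y ω) ∧ Φ (|Y ω|) ≤ (S ω).toReal := by
    intro ω hω
    have hbound : ∀ k, ENNReal.ofReal (Φ (|X (φ k) ω|)) ≤ S ω := by
      intro k
      calc ENNReal.ofReal (Φ (|X (φ k) ω|))
          ≤ ENNReal.ofReal (Φ (|X₀ ω|) + |Φ (|X (φ k) ω|) - Φ (|X₀ ω|)|) :=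
            ENNReal.ofReal_le_ofReal
              (by linarith [le_abs_self (Φ (|X (φ k) ω|) - Φ (|X₀ ω|))])
        _ ≤ ENNReal.ofReal (Φ (|X₀ ω|))
            + ENNReal.ofReal (|Φ (|X (φ k) ω|) - Φ (|X₀ ω|)|) := ENNReal.ofReal_add_le
        _ ≤ S ω := add_le_add le_rfl (ENNReal.le_tsum k)
    have hΦa_le : ∀ k, Φ (|X (φ k) ω|) ≤ (S ω).toReal := by
      intro k
      have h := ENNReal.toReal_mono hω.ne (hbound k)
      rwa [ENNReal.toReal_ofReal (hgnn (φ k) ω)] at h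
    have hCnn : (0 : ℝ) ≤ (S ω).toReal := ENNReal.toReal_nonneg
    have haB : ∀ k, |X (φ k) ω| ≤ max x₁ ((S ω).toReal * x₁ / Φ x₁) := by
      intro k
      rcases le_total (|X (φ k) ω|) x₁ with h | h
      · exact h.trans (le_max_left _ _)
      · have h1 : |X (φ k) ω| / x₁ * Φ x₁ ≤ (S ω).toReal :=
          (orlicz_ge_of_ge hΦ hx₁pos h).trans (hΦa_le k)
        have h3 : |X (φ k) ω| * Φ x₁ ≤ (S ω).toReal * x₁ := by
          have h2 := mul_le_mul_of_nonneg_right h1 hx₁pos.le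
          calc |X (φ k) ω| * Φ x₁ = |X (φ k) ω| / x₁ * Φ x₁ * x₁ := by field_simp
            _ ≤ (S ω).toReal * x₁ := h2
        refine le_trans ?_ (le_max_right _ _)
        rw [le_div_iff₀ hΦx₁pos]
        exact h3
    have hFne : (⨆ k, ENNReal.ofReal (|X (φ k) ω|)) ≠ ⊤ := by
      refine (lt_of_le_of_lt (iSup_le fun k => ENNReal.ofReal_le_ofReal (haB k))
        ENNReal.ofReal_lt_top).ne
    have haY : ∀ k, |X (φ k) ω| ≤ Y ω := by
      intro k
      have h := ENNReal.toReal_mono hFne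
        (le_iSup (fun k => ENNReal.ofReal (|X (φ k) ω|)) k)
      rwa [ENNReal.toReal_ofReal (abs_nonneg _)] at h
    have hYnn : 0 ≤ Y ω := ENNReal.toReal_nonneg
    refine ⟨haY, ?_⟩
    rw [abs_of_nonneg hYnn]
    have happrox : ∀ ε : ℝ, 0 < ε → ∃ k, Y ω - ε < |X (φ k) ω| := by
      intro ε hε
      by_contra hcon
      push_neg at hcon
      have h0 : 0 ≤ Y ω - ε := le_trans (abs_nonneg _) (hcon 0)
      have hle : (⨆ k, ENNReal.ofReal (|X (φ k) ω|)) ≤ ENNReal.ofReal (Y ω - ε) :=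
        iSup_le fun k => ENNReal.ofReal_le_ofReal (hcon k)
      have h2 := ENNReal.toReal_mono ENNReal.ofReal_ne_top hle
      rw [ENNReal.toReal_ofReal h0] at h2
      have : Y ω ≤ Y ω - ε := h2
      linarith
    rcases eq_or_lt_of_le hYnn with hY0 | hYpos
    · rw [← hY0, hΦ.map_zero]; exact hCnn
    · -- approximate Y from below and use continuity of Φ within [0, ∞)
      have htle : ∀ m : ℕ, Φ (Y ω - Y ω / (m + 2)) ≤ (S ω).toReal := by
        intro m
        have hfrac : 0 < Y ω / ((m : ℝ) + 2) := by positivity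
        have hfrac1 : Y ω / ((m : ℝ) + 2) ≤ Y ω := by
          rw [div_le_iff₀ (by positivity)]
          nlinarith
        obtain ⟨k, hk⟩ := happrox (Y ω / (m + 2)) hfrac
        refine le_trans (hΦ.monotoneOn (Set.mem_Ici.mpr (by linarith))
          (Set.mem_Ici.mpr (abs_nonneg _)) hk.le) (hΦa_le k)
      have httendsto : Tendsto (fun m : ℕ => Y ω - Y ω / (m + 2)) atTop (nhds (Y ω)) := by
        have h1 : Tendsto (fun m : ℕ => Y ω / (m + 2)) atTop (nhds 0) := by
          have h0 := (tendsto_const_div_atTop_nhds_zero_nat (Y ω)).comp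
            (tendsto_add_atTop_nat 2)
          have heq2 : ((fun n : ℕ => Y ω / (n : ℝ)) ∘ fun a => a + 2)
              = fun m : ℕ => Y ω / ((m : ℝ) + 2) := by
            funext m
            simp only [Function.comp_apply, Nat.cast_add, Nat.cast_ofNat]
          rwa [heq2] at h0
        have := (tendsto_const_nhds (x := Y ω)).sub h1
        simpa using this
      have hwithin : Tendsto (fun m : ℕ => Y ω - Y ω / (m + 2)) atTop
          (nhdsWithin (Y ω) (Set.Ici 0)) := by
        apply tendsto_nhdsWithin_of_tendsto_nhds_of_eventually_within _ httendsto
        filter_upwards with m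
        have hfrac1 : Y ω / ((m : ℝ) + 2) ≤ Y ω := by
          rw [div_le_iff₀ (by positivity)]
          nlinarith
        exact Set.mem_Ici.mpr (by linarith)
      exact le_of_tendsto ((orlicz_cwa hΦ hYnn).comp hwithin)
        (Eventually.of_forall htle)
  -- integrability of Φ(|Y|)
  have hΦYint : Integrable (fun ω => Φ (|Y ω|)) μ := by
    refine ⟨(hcomp Y hYm).aestronglyMeasurable, ?_⟩
    rw [hasFiniteIntegral_iff_ofReal
      (Eventually.of_forall fun ω => orlicz_nonneg hΦ (abs_nonneg _))]
    calc ∫⁻ ω, ENNReal.ofReal (Φ (|Y ω|)) ∂μ ≤ ∫⁻ ω, S ω ∂μ := by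
          apply lintegral_mono_ae
          filter_upwards [hSfin] with ω hω
          exact ENNReal.ofReal_le_of_le_toReal ((key ω hω).2)
      _ < ⊤ := hSint
  refine ⟨φ, hφmono, ⟨Y, hΦYint, fun k => ?_⟩, ?_⟩
  · filter_upwards [hSfin] with ω hω
    exact (key ω hω).1 k
  · filter_upwards [has] with ω hω
    exact hω.comp hφmono.tendsto_atTop
end

section
/- Let Φ be an Orlicz function and ρ : Y^Φ → ℝ law invariant over a nonatomic probability space. If the induced map R_ρ on laws is sequentially continuous for Φ-weak convergence, then ρ is order continuous on Y^Φ. -/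
open MeasureTheory Filter

/-- If the induced map on laws of a law-invariant functional `ρ` on the Young
class `Y^Φ` over a nonatomic probability space is sequentially continuous for
Φ-weak convergence, then `ρ` is order continuous on `Y^Φ`. -/
theorem PhiWeak_continuous_implies_orderContinuous
    {Ω : Type*} [MeasurableSpace Ω] (μ : Measure Ω) [IsProbabilityMeasure μ]
    [MeasureTheory.NullSingletonClass μ]
    (Φ : ℝ → ℝ) (hΦ : IsOrliczFunction Φ)
    (ρ : (Ω → ℝ) → ℝ)
    (hlaw : ∀ X Y : Ω → ℝ, Measurable X → Measurable Y →
      Integrable (fun ω => Φ (|X ω|)) μ → Integrable (fun ω => Φ (|Y ω|)) μ →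
      μ.map X = μ.map Y → ρ X = ρ Y)
    (hPhiWeak : ∀ (X : ℕ → Ω → ℝ) (X₀ : Ω → ℝ),
      (∀ n, Measurable (X n)) → Measurable X₀ →
      (∀ n, Integrable (fun ω => Φ (|X n ω|)) μ) →
      Integrable (fun ω => Φ (|X₀ ω|)) μ →
      (∀ f : BoundedContinuousFunction ℝ ℝ,
        Tendsto (fun n => ∫ ω, f (X n ω) ∂μ) atTop (nhds (∫ ω, f (X₀ ω) ∂μ))) →
      Tendsto (fun n => ∫ ω, Φ (|X n ω|) ∂μ) atTop (nhds (∫ ω, Φ (|X₀ ω|) ∂μ)) →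
      Tendsto (fun n => ρ (X n)) atTop (nhds (ρ X₀))) :
    ∀ (X : ℕ → Ω → ℝ) (X₀ : Ω → ℝ),
      (∀ n, Measurable (X n)) → Measurable X₀ →
      (∀ n, Integrable (fun ω => Φ (|X n ω|)) μ) →
      Integrable (fun ω => Φ (|X₀ ω|)) μ →
      (∀ᵐ ω ∂μ, Tendsto (fun n => X n ω) atTop (nhds (X₀ ω))) →
      (∃ Y : Ω → ℝ, Integrable (fun ω => Φ (|Y ω|)) μ ∧
        ∀ n, ∀ᵐ ω ∂μ, |X n ω| ≤ Y ω) →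
      Tendsto (fun n => ρ (X n)) atTop (nhds (ρ X₀)) := by
  intro X X₀ hXm hX₀m hint hint₀ hae ⟨Y, hYint, hYdom⟩
  -- nonnegativity of Φ on [0,∞)
  have hnn : ∀ x : ℝ, 0 ≤ x → 0 ≤ Φ x := fun x hx => by
    have := hΦ.monotoneOn (Set.self_mem_Ici) hx hx
    rwa [hΦ.map_zero] at this
  -- continuity of Φ within Ici 0 at every nonneg point
  have hcont : ∀ a : ℝ, 0 ≤ a → ContinuousWithinAt Φ (Set.Ici 0) a := by
    intro a ha
    rcases eq_or_lt_of_le ha with h0 | hpos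
    · -- a = 0 : squeeze
      obtain ⟨x₀, hx₀, hΦx₀⟩ := hΦ.nonconst
      have hx₀pos : 0 < x₀ := by
        refine hx₀.lt_of_ne fun h => hΦx₀ ?_
        rw [← h, hΦ.map_zero]
      have hΦx₀pos : 0 < Φ x₀ := lt_of_le_of_ne (hnn x₀ hx₀) (Ne.symm hΦx₀)
      have key : ∀ y : ℝ, 0 ≤ y → y ≤ x₀ → Φ y ≤ (Φ x₀ / x₀) * y := by
        intro y hy hyx
        have ht : y / x₀ ∈ Set.Icc (0:ℝ) 1 :=
          ⟨div_nonneg hy hx₀pos.le, (div_le_one hx₀pos).2 hyx⟩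
        have := hΦ.convexOn.2 (Set.self_mem_Ici) (Set.mem_Ici.2 hx₀)
          (by linarith [ht.2] : (0:ℝ) ≤ 1 - y / x₀) ht.1 (by ring)
        have hcomb : (1 - y / x₀) • (0:ℝ) + (y / x₀) • x₀ = y := by
          rw [smul_eq_mul, smul_eq_mul, mul_zero, zero_add, div_mul_cancel₀ y hx₀pos.ne']
        rw [hcomb] at this
        calc Φ y ≤ (1 - y / x₀) * Φ 0 + (y / x₀) * Φ x₀ := this
          _ = (Φ x₀ / x₀) * y := by rw [hΦ.map_zero]; ring
      subst h0
      unfold ContinuousWithinAt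
      rw [hΦ.map_zero]
      apply squeeze_zero' (f := fun y => Φ y) (g := fun y => (Φ x₀ / x₀) * y)
      · filter_upwards [self_mem_nhdsWithin] with y hy using hnn y hy
      · filter_upwards [self_mem_nhdsWithin,
          (nhdsWithin_le_nhds (Iic_mem_nhds hx₀pos : Set.Iic x₀ ∈ nhds (0:ℝ)))] with y hy hy'
          using key y hy hy'
      · have : Tendsto (fun y : ℝ => (Φ x₀ / x₀) * y) (nhds 0) (nhds ((Φ x₀ / x₀) * 0)) :=
          (continuous_const.mul continuous_id).tendsto 0
        rw [mul_zero] at this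
        exact this.mono_left nhdsWithin_le_nhds
    · -- a > 0 : interior point
      have hco := hΦ.convexOn.continuousOn_interior
      rw [interior_Ici] at hco
      exact ((hco.continuousAt (Ioi_mem_nhds hpos)).continuousWithinAt)
  -- a.e. pointwise convergence of Φ(|X n|) to Φ(|X₀|)
  have haePhi : ∀ᵐ ω ∂μ,
      Tendsto (fun n => Φ (|X n ω|)) atTop (nhds (Φ (|X₀ ω|))) := by
    filter_upwards [hae] with ω hω
    have habs : Tendsto (fun n => |X n ω|) atTop (nhds (|X₀ ω|)) :=
      (continuous_abs.tendsto _).comp hω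
    have habs' : Tendsto (fun n => |X n ω|) atTop (nhdsWithin (|X₀ ω|) (Set.Ici 0)) :=
      tendsto_nhdsWithin_of_tendsto_nhds_of_eventually_within _ habs
        (Eventually.of_forall fun n => Set.mem_Ici.2 (abs_nonneg _))
    exact (hcont _ (abs_nonneg _)).tendsto.comp habs'
  -- domination
  have hdom : ∀ n, ∀ᵐ ω ∂μ, ‖Φ (|X n ω|)‖ ≤ Φ (|Y ω|) := by
    intro n
    filter_upwards [hYdom n] with ω hω
    have h1 : |X n ω| ≤ |Y ω| := hω.trans (le_abs_self _)
    have h2 : Φ (|X n ω|) ≤ Φ (|Y ω|) :=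
      hΦ.monotoneOn (Set.mem_Ici.2 (abs_nonneg _)) (Set.mem_Ici.2 (abs_nonneg _)) h1
    rw [Real.norm_eq_abs, abs_of_nonneg (hnn _ (abs_nonneg _))]
    exact h2
  apply hPhiWeak X X₀ hXm hX₀m hint hint₀
  · intro f
    apply tendsto_integral_of_dominated_convergence (fun _ => ‖f‖)
    · intro n
      exact (f.continuous.comp_aestronglyMeasurable (hXm n).aestronglyMeasurable)
    · exact integrable_const _
    · intro n
      exact Eventually.of_forall fun ω => f.norm_coe_le_norm _
    · filter_upwards [hae] with ω hω using (f.continuous.tendsto _).comp hω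
  · apply tendsto_integral_of_dominated_convergence (fun ω => Φ (|Y ω|))
    · exact fun n => (hint n).aestronglyMeasurable
    · exact hYint
    · exact hdom
    · exact haePhi
end

section
/- Let ρ : L^∞ → ℝ be law invariant and order continuous on L^∞ (over a probability space). If X_n, X ∈ L^∞ satisfy ‖X_n‖_∞ ≤ ‖X‖_∞ for all n, the laws of X_n converge weakly to the law of some X′ with the same law as X, then ρ(X_n) → ρ(X). More precisely: if μ_n are laws supported in [−M,M] converging weakly to a law μ₀ supported in [−M,M], then R_ρ(μ_n) → R_ρ(μ₀). -/
open MeasureTheory Filter Set Topology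


noncomputable def cdfR (κ : Measure ℝ) (x : ℝ) : ℝ := (κ (Iic x)).toReal

lemma cdfR_mono (κ : Measure ℝ) [IsFiniteMeasure κ] : Monotone (cdfR κ) := fun _ _ hxy =>
  ENNReal.toReal_mono (measure_ne_top κ _) (measure_mono (Iic_subset_Iic.2 hxy))

lemma cdfR_measurable (κ : Measure ℝ) [IsFiniteMeasure κ] : Measurable (cdfR κ) :=
  (cdfR_mono κ).measurable

lemma cdfR_nonneg (κ : Measure ℝ) (x : ℝ) : 0 ≤ cdfR κ x := ENNReal.toReal_nonneg

lemma cdfR_le_mass (κ : Measure ℝ) [IsFiniteMeasure κ] (x : ℝ) : cdfR κ x ≤ (κ univ).toReal :=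
  ENNReal.toReal_mono (measure_ne_top κ _) (measure_mono (subset_univ _))

lemma cdfR_tendsto_right (κ : Measure ℝ) [IsFiniteMeasure κ] (x : ℝ) :
    Tendsto (fun n : ℕ => cdfR κ (x + 1/(n+1))) atTop (𝓝 (cdfR κ x)) := by
  have h1 : Tendsto (fun n : ℕ => κ (Iic (x + 1/(n+1)))) atTop
      (𝓝 (κ (⋂ n : ℕ, Iic (x + 1/(n+1))))) := by
    apply tendsto_measure_iInter_atTop
    · exact fun n => measurableSet_Iic.nullMeasurableSet
    · intro a b hab
      apply Iic_subset_Iic.2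
      have : (1:ℝ)/(b+1) ≤ 1/(a+1) := by
        apply one_div_le_one_div_of_le (by positivity)
        exact_mod_cast by omega
      linarith
    · exact ⟨0, measure_ne_top κ _⟩
  have h2 : (⋂ n : ℕ, Iic (x + 1/(n+1))) = Iic x := by
    ext y; simp only [mem_iInter, mem_Iic]
    constructor
    · intro h
      by_contra hc
      push_neg at hc
      obtain ⟨n, hn⟩ := exists_nat_one_div_lt (sub_pos.2 hc)
      have h' := h n
      have : (1:ℝ)/(n+1) < y - x := hn
      linarith
    · intro h n
      have : (0:ℝ) < 1/(n+1) := by positivity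
      linarith
  rw [h2] at h1
  exact (ENNReal.tendsto_toReal (measure_ne_top κ (Iic x))).comp h1

lemma le_cdfR_of_forall (κ : Measure ℝ) [IsFiniteMeasure κ] {u x : ℝ}
    (h : ∀ n : ℕ, u ≤ cdfR κ (x + 1/(n+1))) : u ≤ cdfR κ x :=
  ge_of_tendsto' (cdfR_tendsto_right κ x) h

lemma cdfR_eq_mass {κ : Measure ℝ} [IsFiniteMeasure κ] {M : ℝ} (hup : κ (Ioi M) = 0)
    {x : ℝ} (hx : M ≤ x) : cdfR κ x = (κ univ).toReal := by
  unfold cdfR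
  congr 1
  have h0 : κ (Ioi x) = 0 := measure_mono_null (Ioi_subset_Ioi hx) hup
  have := measure_union_add_inter (μ := κ) (Iic x) (measurableSet_Ioi (a := x))
  rw [Iic_union_Ioi] at this
  have h2 : Iic x ∩ Ioi x = ∅ := by ext y; simp only [mem_inter_iff, mem_Iic, mem_Ioi, mem_empty_iff_false, iff_false, not_and, not_lt]; intro h; exact h
  rw [h2, measure_empty, add_zero, h0, add_zero] at this
  exact this.symm
  
lemma cdfR_eq_zero {κ : Measure ℝ} {M : ℝ} (hdown : κ (Iio (-M)) = 0)
    {x : ℝ} (hx : x < -M) : cdfR κ x = 0 := by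
  unfold cdfR
  rw [measure_mono_null (Iic_subset_Iio.2 hx) hdown]
  simp



/-- The set whose infimum defines the quantile. -/
def quantSet (M : ℝ) (κ : Measure ℝ) (u : ℝ) : Set ℝ :=
  {x : ℝ | (u ≤ cdfR κ x ∨ M + 1 ≤ x) ∧ -(M+1) ≤ x}

noncomputable def quant (M : ℝ) (κ : Measure ℝ) (u : ℝ) : ℝ := sInf (quantSet M κ u)

lemma quantSet_nonempty {M : ℝ} (hM : 0 ≤ M) (κ : Measure ℝ) (u : ℝ) :
    (quantSet M κ u).Nonempty :=
  ⟨M + 1, Or.inr le_rfl, by linarith⟩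

lemma quantSet_bddBelow (M : ℝ) (κ : Measure ℝ) (u : ℝ) : BddBelow (quantSet M κ u) :=
  ⟨-(M+1), fun _ hy => hy.2⟩

lemma quant_mono {M : ℝ} (hM : 0 ≤ M) (κ : Measure ℝ) : Monotone (quant M κ) := by
  intro u v huv
  apply csInf_le_csInf (quantSet_bddBelow M κ u) (quantSet_nonempty hM κ v)
  intro x hx
  exact ⟨hx.1.imp_left (le_trans huv), hx.2⟩

lemma quant_measurable {M : ℝ} (hM : 0 ≤ M) (κ : Measure ℝ) : Measurable (quant M κ) :=
  (quant_mono hM κ).measurable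

section quantprops
variable {κ : Measure ℝ} [IsFiniteMeasure κ] {M : ℝ} (hM : 0 ≤ M)
  (hup : κ (Ioi M) = 0) (hdown : κ (Iio (-M)) = 0)

lemma cdfR_eq_mass' (hup : κ (Ioi M) = 0) {x : ℝ} (hx : M ≤ x) :
    cdfR κ x = (κ univ).toReal := by
  unfold cdfR
  congr 1
  have h0 : κ (Ioi x) = 0 := measure_mono_null (Ioi_subset_Ioi hx) hup
  have h1 := measure_union_add_inter (μ := κ) (Iic x) (measurableSet_Ioi (a := x))
  rw [Iic_union_Ioi] at h1
  have h2 : Iic x ∩ Ioi x = ∅ := by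
    ext y
    simp only [mem_inter_iff, mem_Iic, mem_Ioi, mem_empty_iff_false, iff_false, not_and, not_lt]
    intro h; exact h
  rw [h2, measure_empty, add_zero, h0, add_zero] at h1
  exact h1.symm

lemma cdfR_eq_zero' (hdown : κ (Iio (-M)) = 0) {x : ℝ} (hx : x < -M) : cdfR κ x = 0 := by
  unfold cdfR
  rw [measure_mono_null (Iic_subset_Iio.2 hx) hdown]
  simp

include hM hup hdown in
lemma quant_mem {u : ℝ} (hu : 0 < u) (hus : u ≤ (κ univ).toReal) :
    quant M κ u ∈ Icc (-M) M := by
  constructor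
  · apply le_csInf (quantSet_nonempty hM κ u)
    intro y hy
    rcases hy.1 with h | h
    · by_contra hc
      push_neg at hc
      have := cdfR_eq_zero' hdown hc
      rw [this] at h
      linarith
    · linarith
  · apply csInf_le (quantSet_bddBelow M κ u)
    refine ⟨Or.inl ?_, by linarith⟩
    rw [cdfR_eq_mass' hup le_rfl]
    exact hus

include hM hup hdown in
lemma quant_le_iff {u : ℝ} (hu : 0 < u) (hus : u ≤ (κ univ).toReal) (x : ℝ) :
    quant M κ u ≤ x ↔ u ≤ cdfR κ x := by
  constructor
  · intro h
    apply le_cdfR_of_forall κ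
    intro n
    have hpos : (0:ℝ) < 1/(n+1) := by positivity
    have h1 : quant M κ u < x + 1/(n+1) := by
      calc quant M κ u ≤ x := h
      _ < x + 1/(n+1) := by linarith
    obtain ⟨y, hy, hyx⟩ := (csInf_lt_iff (quantSet_bddBelow M κ u)
      (quantSet_nonempty hM κ u)).1 h1
    rcases hy.1 with h2 | h2
    · exact le_trans h2 (cdfR_mono κ (le_of_lt hyx))
    · have hle : (1:ℝ)/(n+1) ≤ 1 := by
        rw [div_le_one (by positivity)]
        have : (0:ℝ) ≤ n := Nat.cast_nonneg n
        linarith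
      have : M ≤ x + 1/(n+1) := by linarith
      rw [cdfR_eq_mass' hup this]
      exact hus
  · intro h
    apply csInf_le (quantSet_bddBelow M κ u)
    refine ⟨Or.inl h, ?_⟩
    by_contra hc
    push_neg at hc
    have : x < -M := by linarith
    have := cdfR_eq_zero' hdown this
    rw [this] at h
    linarith

include hM hup hdown in
lemma quant_map :
    (volume.restrict (Ioc 0 (κ univ).toReal)).map (quant M κ) = κ := by
  set s : ℝ := (κ univ).toReal with hs
  have hsnn : 0 ≤ s := ENNReal.toReal_nonneg
  haveI hfin : IsFiniteMeasure (volume.restrict (Ioc 0 s)) := by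
    constructor
    rw [Measure.restrict_apply_univ, Real.volume_Ioc]
    exact ENNReal.ofReal_lt_top
  haveI : IsFiniteMeasure ((volume.restrict (Ioc 0 s)).map (quant M κ)) :=
    Measure.isFiniteMeasure_map _ _
  apply Measure.ext_of_Iic
  intro x
  rw [Measure.map_apply (quant_measurable hM κ) measurableSet_Iic]
  rw [Measure.restrict_apply (α := ℝ) ((quant_measurable hM κ) measurableSet_Iic)]
  have hset : (quant M κ ⁻¹' Iic x) ∩ Ioc 0 s = Ioc 0 (cdfR κ x) := by
    ext u
    simp only [mem_inter_iff, mem_preimage, mem_Iic, mem_Ioc]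
    constructor
    · rintro ⟨hq, hu0, hus⟩
      exact ⟨hu0, (quant_le_iff hM hup hdown hu0 hus x).1 hq⟩
    · rintro ⟨hu0, hux⟩
      have hus : u ≤ s := le_trans hux (cdfR_le_mass κ x)
      exact ⟨(quant_le_iff hM hup hdown hu0 hus x).2 hux, hu0, hus⟩
  rw [hset, Real.volume_Ioc]
  unfold cdfR
  rw [sub_zero, ENNReal.ofReal_toReal (measure_ne_top κ _)]

end quantprops

section helly
variable (H : ℚ → ℝ) (M : ℝ)

/-- Candidate limit quantile function built from limits of CDFs at rationals. -/
def QlimSet (u : ℝ) : Set ℝ := ((fun r : ℚ => (r:ℝ)) '' {r : ℚ | H r < u ∧ (r:ℝ) ≤ M}) ∪ {-M}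

noncomputable def Qlim (u : ℝ) : ℝ := sSup (QlimSet H M u)

variable {M}

lemma QlimSet_nonempty (u : ℝ) : (QlimSet H M u).Nonempty := ⟨-M, Or.inr rfl⟩

lemma QlimSet_bddAbove (hM : 0 ≤ M) (u : ℝ) : BddAbove (QlimSet H M u) := by
  refine ⟨M, fun y hy => ?_⟩
  rcases hy with ⟨r, hr, rfl⟩ | hy
  · exact hr.2
  · simp only [mem_singleton_iff] at hy
    rw [hy]; linarith

lemma Qlim_mono (hM : 0 ≤ M) : Monotone (Qlim H M) := by
  intro u v huv
  apply csSup_le_csSup (QlimSet_bddAbove H hM v) (QlimSet_nonempty H u)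
  rintro y (⟨r, hr, rfl⟩ | hy)
  · exact Or.inl ⟨r, ⟨lt_of_lt_of_le hr.1 huv, hr.2⟩, rfl⟩
  · exact Or.inr hy

lemma Qlim_mem (hM : 0 ≤ M) (u : ℝ) : Qlim H M u ∈ Icc (-M) M :=
  ⟨le_csSup (QlimSet_bddAbove H hM u) (Or.inr rfl),
   csSup_le (QlimSet_nonempty H u) fun y hy => by
    rcases hy with ⟨r, hr, rfl⟩ | hy
    · exact hr.2
    · simp only [mem_singleton_iff] at hy; rw [hy]; linarith⟩

variable {H}
variable {κ : ℕ → Measure ℝ} [∀ k, IsFiniteMeasure (κ k)] {s : ℝ}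
  (hM : 0 ≤ M)
  (hup : ∀ k, κ k (Ioi M) = 0) (hdown : ∀ k, κ k (Iio (-M)) = 0)
  (hmass : ∀ k, (κ k univ).toReal = s)
  (hH : ∀ r : ℚ, Tendsto (fun k => cdfR (κ k) (r:ℝ)) atTop (𝓝 (H r)))

include hM hup hdown hmass hH in
lemma helly_quant_tendsto {u : ℝ} (hu : 0 < u) (hus : u < s)
    (hcont : ContinuousAt (Qlim H M) u) :
    Tendsto (fun k => quant M (κ k) u) atTop (𝓝 (Qlim H M u)) := by
  have humass : ∀ k, u ≤ (κ k univ).toReal := fun k => by rw [hmass k]; exact le_of_lt hus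
  have hquant_mem : ∀ k, quant M (κ k) u ∈ Icc (-M) M :=
    fun k => quant_mem hM (hup k) (hdown k) hu (humass k)
  rw [tendsto_order]
  constructor
  · -- ∀ c < Qlim u, eventually c < quant
    intro c hc
    obtain ⟨y, hy, hcy⟩ := exists_lt_of_lt_csSup (QlimSet_nonempty H u) hc
    rcases hy with ⟨r, hr, rfl⟩ | hy
    · -- y = r rational with H r < u, r ≤ M
      have hev : ∀ᶠ k in atTop, cdfR (κ k) (r:ℝ) < u := (hH r).eventually_lt_const hr.1
      filter_upwards [hev] with k hk
      have hlb : (r:ℝ) ≤ quant M (κ k) u := by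
        apply le_csInf (quantSet_nonempty hM (κ k) u)
        intro z hz
        rcases hz.1 with h | h
        · by_contra hzr
          push_neg at hzr
          have := cdfR_mono (κ k) (le_of_lt hzr)
          linarith
        · linarith [hr.2]
      linarith
    · simp only [mem_singleton_iff] at hy
      subst hy
      apply Eventually.of_forall
      intro k
      exact lt_of_lt_of_le hcy (hquant_mem k).1
  · -- ∀ c > Qlim u, eventually quant < c
    intro c hc
    set ε := c - Qlim H M u with hε
    have hεpos : 0 < ε := by simp [hε]; linarith
    obtain ⟨δ, hδpos, hδ⟩ := Metric.continuousAt_iff.1 hcont (ε/2) (by linarith)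
    set δ' := min (δ/2) ((s - u)/2) with hδ'
    have hδ'pos : 0 < δ' := lt_min (by linarith) (by linarith)
    have h1 : dist (u + δ') u < δ := by
      rw [Real.dist_eq]
      have : |u + δ' - u| = δ' := by rw [show u + δ' - u = δ' by ring, abs_of_pos hδ'pos]
      rw [this]
      calc δ' ≤ δ/2 := min_le_left _ _
      _ < δ := by linarith
    have h2 : Qlim H M (u + δ') < Qlim H M u + ε/2 := by
      have := hδ h1
      rw [Real.dist_eq] at this
      have := abs_lt.1 this
      linarith [this.1]
    obtain ⟨r, hr1, hr2⟩ := exists_rat_btwn (lt_add_of_pos_right (Qlim H M (u + δ')) (by linarith : (0:ℝ) < ε/2))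
    have hrc : (r:ℝ) < c := by
      have : Qlim H M u ≤ Qlim H M (u+δ') := Qlim_mono H hM (le_of_lt (lt_add_of_pos_right u hδ'pos))
      linarith
    have hrnot : (r:ℝ) ∉ QlimSet H M (u + δ') := by
      intro hmem
      have h' : (r:ℝ) ≤ Qlim H M (u + δ') := le_csSup (QlimSet_bddAbove H hM (u + δ')) hmem
      linarith
    by_cases hrM : (r:ℝ) ≤ M
    · -- then ¬ H r < u + δ', so H r ≥ u + δ' > u
      have hHr : u < H r := by
        by_contra hcon
        push_neg at hcon
        rcases lt_or_ge (H r) (u + δ') with h | h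
        · exact hrnot (Or.inl ⟨r, ⟨h, hrM⟩, rfl⟩)
        · linarith
      have hev : ∀ᶠ k in atTop, u < cdfR (κ k) (r:ℝ) := (hH r).eventually_const_lt hHr
      filter_upwards [hev] with k hk
      have : quant M (κ k) u ≤ (r:ℝ) := by
        apply csInf_le (quantSet_bddBelow M (κ k) u)
        constructor
        · exact Or.inl (le_of_lt hk)
        · have := (Qlim_mem H hM (u+δ')).1
          linarith
      linarith
    · push_neg at hrM
      apply Eventually.of_forall
      intro k
      calc quant M (κ k) u ≤ M := (hquant_mem k).2
      _ < (r:ℝ) := hrM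
      _ < c := hrc

end helly

section uniform
variable (ν : Measure ℝ) [IsFiniteMeasure ν]

lemma cdfR_continuous [NullSingletonClass ν] : Continuous (cdfR ν) := by
  rw [continuous_iff_continuousAt]
  intro b
  rw [Metric.continuousAt_iff]
  intro ε hε
  have h0 : ∀ᶠ δ' in 𝓝 (0:ℝ), ν (Icc (b-δ') (b+δ')) < ENNReal.ofReal ε :=
    (tendsto_measure_Icc ν b).eventually_lt_const (by simp [hε])
  obtain ⟨δ₀, hδ₀pos, hδ₀⟩ := Metric.eventually_nhds_iff.1 h0
  refine ⟨δ₀/2, by linarith, ?_⟩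
  intro x hx
  rw [Real.dist_eq] at hx
  have hδb : ν (Icc (b-δ₀/2) (b+δ₀/2)) < ENNReal.ofReal ε := by
    apply hδ₀
    rw [Real.dist_eq, sub_zero, abs_of_pos (by linarith : (0:ℝ) < δ₀/2)]
    linarith
  have key : ∀ y z : ℝ, y ≤ z → b - δ₀/2 ≤ y → z ≤ b + δ₀/2 →
      cdfR ν z - cdfR ν y ≤ (ν (Icc (b-δ₀/2) (b+δ₀/2))).toReal := by
    intro y z hyz hy hz
    have hunion : Iic y ∪ Ioc y z = Iic z := Iic_union_Ioc_eq_Iic hyz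
    have hdisj : Disjoint (Iic y) (Ioc y z) := by
      apply Set.disjoint_left.2
      intro a ha ha'
      simp only [mem_Iic] at ha
      simp only [mem_Ioc] at ha'
      linarith [ha'.1]
    have hm : ν (Iic z) = ν (Iic y) + ν (Ioc y z) := by
      rw [← hunion, measure_union hdisj measurableSet_Ioc]
    have : cdfR ν z = cdfR ν y + (ν (Ioc y z)).toReal := by
      unfold cdfR
      rw [hm, ENNReal.toReal_add (measure_ne_top ν _) (measure_ne_top ν _)]
    rw [this]
    have hsub : Ioc y z ⊆ Icc (b-δ₀/2) (b+δ₀/2) := by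
      intro a ha
      simp only [mem_Ioc] at ha
      exact ⟨by linarith [ha.1], by linarith [ha.2]⟩
    have := ENNReal.toReal_mono (measure_ne_top ν _) (measure_mono hsub)
    linarith
  have hεlt : (ν (Icc (b-δ₀/2) (b+δ₀/2))).toReal < ε :=
    (ENNReal.lt_ofReal_iff_toReal_lt (measure_ne_top ν _)).1 hδb
  rw [Real.dist_eq]
  rcases le_total b x with hbx | hxb
  · rw [abs_of_nonneg (sub_nonneg.2 (cdfR_mono ν hbx))]
    have := key b x hbx (by linarith) (by rw [abs_of_nonneg (by linarith)] at hx; linarith)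
    linarith
  · rw [abs_of_nonpos (sub_nonpos.2 (cdfR_mono ν hxb))]
    have hxge : b - δ₀/2 ≤ x := by
      rcases abs_lt.1 hx with ⟨h1, _⟩
      linarith
    have := key x b hxb hxge (by linarith)
    linarith


lemma cdfR_tendsto_top :
    Tendsto (fun n : ℕ => cdfR ν (n:ℝ)) atTop (𝓝 (ν univ).toReal) := by
  have h1 : Tendsto (fun n : ℕ => ν (Iic (n:ℝ))) atTop (𝓝 (ν (⋃ n : ℕ, Iic (n:ℝ)))) :=
    tendsto_measure_iUnion_atTop (fun a b hab => Iic_subset_Iic.2 (by exact_mod_cast hab))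
  have h2 : (⋃ n : ℕ, Iic (n:ℝ)) = univ := by
    ext y
    simp only [mem_iUnion, mem_Iic, mem_univ, iff_true]
    obtain ⟨n, hn⟩ := exists_nat_ge y
    exact ⟨n, hn⟩
  rw [h2] at h1
  exact (ENNReal.tendsto_toReal (measure_ne_top ν _)).comp h1

lemma cdfR_tendsto_bot :
    Tendsto (fun n : ℕ => cdfR ν (-(n:ℝ))) atTop (𝓝 0) := by
  have h1 : Tendsto (fun n : ℕ => ν (Iic (-(n:ℝ)))) atTop (𝓝 (ν (⋂ n : ℕ, Iic (-(n:ℝ))))) := by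
    apply tendsto_measure_iInter_atTop
    · exact fun n => measurableSet_Iic.nullMeasurableSet
    · exact fun a b hab => Iic_subset_Iic.2 (by simp; exact_mod_cast hab)
    · exact ⟨0, measure_ne_top ν _⟩
  have h2 : (⋂ n : ℕ, Iic (-(n:ℝ))) = ∅ := by
    ext y
    simp only [mem_iInter, mem_Iic, mem_empty_iff_false, iff_false, not_forall, not_le]
    obtain ⟨n, hn⟩ := exists_nat_gt (-y)
    exact ⟨n, by linarith⟩
  rw [h2, measure_empty] at h1
  have := (ENNReal.tendsto_toReal (by simp : (0:ENNReal) ≠ ⊤)).comp h1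
  simpa [cdfR, Function.comp_def] using this

lemma map_cdfR_eq [NullSingletonClass ν] :
    ν.map (cdfR ν) = volume.restrict (Ioc 0 (ν univ).toReal) := by
  set s := (ν univ).toReal with hs
  have hcont := cdfR_continuous ν
  haveI : IsFiniteMeasure (volume.restrict (Ioc 0 s)) := by
    constructor
    rw [Measure.restrict_apply_univ, Real.volume_Ioc]
    exact ENNReal.ofReal_lt_top
  haveI : IsFiniteMeasure (ν.map (cdfR ν)) := Measure.isFiniteMeasure_map _ _
  apply Measure.ext_of_Iic
  intro t
  rw [Measure.map_apply (cdfR_measurable ν) measurableSet_Iic,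
    Measure.restrict_apply measurableSet_Iic]
  rcases lt_or_ge t 0 with ht | ht
  · have hA : cdfR ν ⁻¹' Iic t = ∅ := by
      ext x
      simp only [mem_preimage, mem_Iic, mem_empty_iff_false, iff_false, not_le]
      exact lt_of_lt_of_le ht (cdfR_nonneg ν x)
    have hB : Iic t ∩ Ioc 0 s = ∅ := by
      ext u
      simp only [mem_inter_iff, mem_Iic, mem_Ioc, mem_empty_iff_false, iff_false, not_and]
      intro h1 h2
      linarith [h2]
    rw [hA, hB, measure_empty, measure_empty]
  · rcases le_or_gt s t with hts | hts
    · have hA : cdfR ν ⁻¹' Iic t = univ := by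
        ext x
        simp only [mem_preimage, mem_Iic, mem_univ, iff_true]
        exact le_trans (cdfR_le_mass ν x) hts
      have hB : Iic t ∩ Ioc 0 s = Ioc 0 s := by
        apply inter_eq_self_of_subset_right
        intro u hu
        simp only [mem_Ioc] at hu
        simp only [mem_Iic]
        linarith [hu.2]
      rw [hA, hB, Real.volume_Ioc, sub_zero]
      exact (ENNReal.ofReal_toReal (measure_ne_top ν _)).symm
    · -- 0 ≤ t < s
      by_cases hA : cdfR ν ⁻¹' Iic t = ∅
      · have ht0 : t = 0 := by
          by_contra h0
          have htpos : 0 < t := lt_of_le_of_ne ht (Ne.symm h0)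
          obtain ⟨n, hn⟩ := ((cdfR_tendsto_bot ν).eventually_lt_const htpos).exists
          have : (-(n:ℝ)) ∈ cdfR ν ⁻¹' Iic t := le_of_lt hn
          rw [hA] at this
          exact this
        subst ht0
        have hB : Iic (0:ℝ) ∩ Ioc 0 s = ∅ := by
          ext u
          simp only [mem_inter_iff, mem_Iic, mem_Ioc, mem_empty_iff_false, iff_false, not_and]
          intro h1 h2
          linarith [h2]
        rw [hA, hB, measure_empty, measure_empty]
      · have hAne : (cdfR ν ⁻¹' Iic t).Nonempty := nonempty_iff_ne_empty.2 hA
        obtain ⟨n₀, hn₀⟩ := ((cdfR_tendsto_top ν).eventually_const_lt hts).exists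
        have hbdd : BddAbove (cdfR ν ⁻¹' Iic t) := by
          refine ⟨n₀, fun y hy => ?_⟩
          simp only [mem_preimage, mem_Iic] at hy
          by_contra hc
          push_neg at hc
          have := cdfR_mono ν (le_of_lt hc)
          linarith
        have hclosed : IsClosed (cdfR ν ⁻¹' Iic t) := IsClosed.preimage hcont isClosed_Iic
        set c := sSup (cdfR ν ⁻¹' Iic t) with hc
        have hcA : c ∈ cdfR ν ⁻¹' Iic t := hclosed.csSup_mem hAne hbdd
        have hAeq : cdfR ν ⁻¹' Iic t = Iic c := by
          apply subset_antisymm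
          · exact fun y hy => le_csSup hbdd hy
          · intro y hy
            simp only [mem_Iic] at hy
            simp only [mem_preimage, mem_Iic]
            exact le_trans (cdfR_mono ν hy) hcA
        have hFc : cdfR ν c = t := by
          apply le_antisymm hcA
          apply ge_of_tendsto' (cdfR_tendsto_right ν c)
          intro n
          by_contra hcon
          push_neg at hcon
          have : c + 1/(n+1) ∈ cdfR ν ⁻¹' Iic t := le_of_lt hcon
          rw [hAeq] at this
          simp only [mem_Iic] at this
          have hpos : (0:ℝ) < 1/(n+1) := by positivity
          linarith
        have hB : Iic t ∩ Ioc 0 s = Ioc 0 t := by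
          ext u
          simp only [mem_inter_iff, mem_Iic, mem_Ioc]
          constructor
          · rintro ⟨h1, h2, h3⟩
            exact ⟨h2, h1⟩
          · rintro ⟨h1, h2⟩
            exact ⟨h2, h1, by linarith⟩
        rw [hAeq, hB, Real.volume_Ioc, sub_zero, ← hFc]
        unfold cdfR
        rw [ENNReal.ofReal_toReal (measure_ne_top ν _)]

end uniform


section core

lemma countable_atoms (π : Measure ℝ) [IsFiniteMeasure π] :
    Set.Countable {y : ℝ | π {y} ≠ 0} := by
  have h := MeasureTheory.Measure.countable_meas_pos_of_disjoint_of_meas_iUnion_ne_top (ι := ℝ)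
    π (As := fun y => {y}) (fun i => measurableSet_singleton i)
    (fun i j hij => by simpa [Function.onFun] using hij)
    (by exact measure_ne_top π _)
  have heq : {y : ℝ | π {y} ≠ 0} = {y : ℝ | 0 < π {y}} := by
    ext y; simp [pos_iff_ne_zero]
  rw [heq]; exact h

lemma measurable_piecewise_countable {D : Set ℝ} [∀ j : ℝ, Decidable (j ∈ D)] (hD : D.Countable) (f : ℝ → ℝ) {g : ℝ → ℝ}
    (hg : Measurable g) : Measurable (D.piecewise f g) := by
  intro A hA
  rw [Set.piecewise_preimage]
  unfold Set.ite
  apply MeasurableSet.union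
  · exact (hD.mono inter_subset_right).measurableSet
  · exact MeasurableSet.diff (hg hA) hD.measurableSet

theorem core_extraction (π : Measure ℝ) [IsProbabilityMeasure π] {M : ℝ} (hM : 0 ≤ M)
    (φ : ℕ → ℝ → ℝ) (hφm : ∀ k, Measurable (φ k)) (hφb : ∀ k, ∀ᵐ x ∂π, |φ k x| ≤ M) :
    ∃ σ : ℕ → ℕ, StrictMono σ ∧ ∃ W : ℕ → ℝ → ℝ, ∃ Winf : ℝ → ℝ,
      (∀ k, Measurable (W k)) ∧ Measurable Winf ∧
      (∀ k, π.map (W k) = π.map (φ (σ k))) ∧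
      (∀ k, ∀ᵐ x ∂π, |W k x| ≤ M) ∧ (∀ᵐ x ∂π, |Winf x| ≤ M) ∧
      (∀ᵐ x ∂π, Tendsto (fun k => W k x) atTop (𝓝 (Winf x))) := by
  classical
  set D : Set ℝ := {y : ℝ | π {y} ≠ 0} with hD
  have hDc : D.Countable := countable_atoms π
  have hDm : MeasurableSet D := hDc.measurableSet
  set ν : Measure ℝ := π.restrict Dᶜ with hν
  haveI : IsFiniteMeasure ν := by
    constructor
    rw [Measure.restrict_apply_univ]
    exact lt_of_le_of_lt (measure_mono (subset_univ _)) (measure_lt_top π univ)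
  haveI : NullSingletonClass ν := by
    constructor
    intro x
    by_cases hx : x ∈ D
    · rw [hν, Measure.restrict_apply (measurableSet_singleton x)]
      have : ({x} : Set ℝ) ∩ Dᶜ = ∅ := by
        ext y; simp only [mem_inter_iff, mem_singleton_iff, mem_compl_iff,
          mem_empty_iff_false, iff_false, not_and]
        rintro rfl; simp [hx]
      rw [this, measure_empty]
    · rw [hν, Measure.restrict_apply (measurableSet_singleton x)]
      apply measure_mono_null inter_subset_left
      simpa [hD] using hx
  set s : ℝ := (ν univ).toReal with hs
  -- pointwise bound at atoms
  have hatom : ∀ k, ∀ y ∈ D, |φ k y| ≤ M := by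
    intro k y hy
    by_contra h
    have h1 := ae_iff.1 (hφb k)
    exact hy (measure_mono_null (singleton_subset_iff.2 h) h1)
  -- enumeration of D
  obtain ⟨e, he⟩ : ∃ e : ℕ → ℝ, insert (0:ℝ) D = range e :=
    (hDc.insert 0).exists_eq_range (insert_nonempty _ _)
  have hDe : D ⊆ range e := by rw [← he]; exact subset_insert _ _
  -- the clamp
  set cl : ℝ → ℝ := fun v => max (-M) (min M v) with hcl
  have hclmem : ∀ v, cl v ∈ Icc (-M) M :=
    fun v => ⟨le_max_left _ _, max_le (by linarith) (min_le_left _ _)⟩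
  have hcleq : ∀ v, |v| ≤ M → cl v = v := by
    intro v hv
    rcases abs_le.1 hv with ⟨h1, h2⟩
    rw [hcl]
    simp only []
    rw [min_eq_right h2, max_eq_right h1]
  -- compact product extraction
  have hmem01 : ∀ k (r : ℚ), cdfR (ν.map (φ k)) (r:ℝ) ∈ Icc (0:ℝ) 1 := by
    intro k r
    refine ⟨cdfR_nonneg _ _, ?_⟩
    haveI : IsFiniteMeasure (ν.map (φ k)) := Measure.isFiniteMeasure_map _ _
    refine le_trans (cdfR_le_mass _ _) ?_
    rw [Measure.map_apply (hφm k) MeasurableSet.univ, preimage_univ]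
    calc (ν univ).toReal ≤ (π univ).toReal := by
          apply ENNReal.toReal_mono (measure_ne_top π _)
          rw [hν, Measure.restrict_apply_univ]
          exact measure_mono (subset_univ _)
    _ = 1 := by simp
  set seqP : ℕ → (ℕ → Icc (-M) M) × (ℚ → Icc (0:ℝ) 1) := fun k =>
    (fun i => ⟨cl (φ k (e i)), hclmem _⟩, fun r => ⟨cdfR (ν.map (φ k)) (r:ℝ), hmem01 k r⟩)
    with hseqP
  obtain ⟨L, σ, hσmono, hσconv⟩ := CompactSpace.tendsto_subseq seqP
  have hconv1 : ∀ i : ℕ, Tendsto (fun k => cl (φ (σ k) (e i))) atTop (𝓝 ((L.1 i : ℝ))) := by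
    intro i
    have h2 : Tendsto (fun k => (seqP (σ k)).1 i) atTop (𝓝 (L.1 i)) :=
      (((continuous_apply i).comp continuous_fst).tendsto L).comp hσconv
    exact (continuous_subtype_val.tendsto _).comp h2
  have hconv2 : ∀ r : ℚ, Tendsto (fun k => cdfR (ν.map (φ (σ k))) (r:ℝ)) atTop
      (𝓝 ((L.2 r : ℝ))) := by
    intro r
    have h2 : Tendsto (fun k => (seqP (σ k)).2 r) atTop (𝓝 (L.2 r)) :=
      (((continuous_apply r).comp continuous_snd).tendsto L).comp hσconv
    exact (continuous_subtype_val.tendsto _).comp h2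
  set H : ℚ → ℝ := fun r => (L.2 r : ℝ) with hH
  set κ : ℕ → Measure ℝ := fun k => ν.map (φ (σ k)) with hκ
  haveI hκfin : ∀ k, IsFiniteMeasure (κ k) := fun k => Measure.isFiniteMeasure_map _ _
  have hνb : ∀ k, ∀ᵐ x ∂ν, |φ k x| ≤ M := fun k => ae_restrict_of_ae (hφb k)
  have hκup : ∀ k, κ k (Ioi M) = 0 := by
    intro k
    rw [hκ]
    simp only []
    rw [Measure.map_apply (hφm (σ k)) measurableSet_Ioi]
    apply measure_mono_null ?_ (ae_iff.1 (hνb (σ k)))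
    intro x hx
    simp only [mem_preimage, mem_Ioi] at hx
    simp only [mem_setOf_eq, not_le]
    calc M < φ (σ k) x := hx
    _ ≤ |φ (σ k) x| := le_abs_self _
  have hκdown : ∀ k, κ k (Iio (-M)) = 0 := by
    intro k
    rw [hκ]
    simp only []
    rw [Measure.map_apply (hφm (σ k)) measurableSet_Iio]
    apply measure_mono_null ?_ (ae_iff.1 (hνb (σ k)))
    intro x hx
    simp only [mem_preimage, mem_Iio] at hx
    simp only [mem_setOf_eq, not_le]
    calc M < -(φ (σ k) x) := by linarith
    _ ≤ |φ (σ k) x| := neg_le_abs _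
  have hκmass : ∀ k, (κ k univ).toReal = s := by
    intro k
    rw [hκ]
    simp only []
    rw [Measure.map_apply (hφm (σ k)) MeasurableSet.univ, preimage_univ]
  -- the uniform transform
  have hmap_unif : ν.map (cdfR ν) = volume.restrict (Ioc 0 s) := map_cdfR_eq ν
  -- definitions of W and Winf
  set W : ℕ → ℝ → ℝ := fun k => D.piecewise (φ (σ k)) (fun x => quant M (κ k) (cdfR ν x))
    with hW
  set Winf : ℝ → ℝ := D.piecewise (fun x => limUnder atTop (fun k => φ (σ k) x))
    (fun x => Qlim H M (cdfR ν x)) with hWinf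
  have hWm : ∀ k, Measurable (W k) := by
    intro k
    simp only [hW]
    apply measurable_piecewise_countable hDc (φ (σ k))
    exact (quant_measurable hM (κ k)).comp (cdfR_measurable ν)
  have hWinfm : Measurable Winf := by
    simp only [hWinf]
    apply measurable_piecewise_countable hDc
    exact ((Qlim_mono H hM).measurable).comp (cdfR_measurable ν)
  -- convergence at atoms
  have hatomconv : ∀ y ∈ D, Tendsto (fun k => φ (σ k) y) atTop (𝓝 (Winf y)) ∧ |Winf y| ≤ M := by
    intro y hy
    obtain ⟨i, hi⟩ := hDe hy
    have h1 : Tendsto (fun k => φ (σ k) y) atTop (𝓝 ((L.1 i : ℝ))) := by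
      have := hconv1 i
      rw [hi] at this
      apply this.congr
      intro k
      exact hcleq _ (hatom (σ k) y hy)
    have h2 : Winf y = (L.1 i : ℝ) := by
      rw [hWinf, Set.piecewise_eq_of_mem _ _ _ hy]
      exact h1.limUnder_eq
    refine ⟨by rw [h2]; exact h1, ?_⟩
    rw [h2]
    exact abs_le.2 ⟨(L.1 i).2.1, (L.1 i).2.2⟩
  -- laws
  have hlaw : ∀ k, π.map (W k) = π.map (φ (σ k)) := by
    intro k
    have hsplit : π.restrict D + π.restrict Dᶜ = π := Measure.restrict_add_restrict_compl hDm
    have h1 : (π.restrict D).map (W k) = (π.restrict D).map (φ (σ k)) := by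
      apply Measure.map_congr
      rw [Filter.EventuallyEq]
      rw [ae_restrict_iff' hDm]
      apply Eventually.of_forall
      intro x hx
      exact Set.piecewise_eq_of_mem _ _ _ hx
    have h2 : ν.map (W k) = κ k := by
      have h2a : ν.map (W k) = ν.map (fun x => quant M (κ k) (cdfR ν x)) := by
        apply Measure.map_congr
        rw [Filter.EventuallyEq, hν, ae_restrict_iff' hDm.compl]
        apply Eventually.of_forall
        intro x hx
        exact Set.piecewise_eq_of_notMem _ _ _ hx
      rw [h2a]
      have h2b : (fun x => quant M (κ k) (cdfR ν x)) = (quant M (κ k)) ∘ (cdfR ν) := rfl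
      rw [h2b, ← Measure.map_map (quant_measurable hM _) (cdfR_measurable ν), hmap_unif]
      have := quant_map (κ := κ k) hM (hκup k) (hκdown k)
      rw [hκmass k] at this
      exact this
    calc π.map (W k) = (π.restrict D + π.restrict Dᶜ).map (W k) := by rw [hsplit]
    _ = (π.restrict D).map (W k) + ν.map (W k) := Measure.map_add _ _ (hWm k)
    _ = (π.restrict D).map (φ (σ k)) + ν.map (φ (σ k)) := by rw [h1, h2, hκ]
    _ = (π.restrict D + π.restrict Dᶜ).map (φ (σ k)) := (Measure.map_add _ _ (hφm (σ k))).symm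
    _ = π.map (φ (σ k)) := by rw [hsplit]
  -- null sets in the complement part
  have hnull : ∀ B : Set ℝ, MeasurableSet B → (volume.restrict (Ioc 0 s)) B = 0 →
      π (Dᶜ ∩ cdfR ν ⁻¹' B) = 0 := by
    intro B hB hvol
    have h1 : ν (cdfR ν ⁻¹' B) = 0 := by
      rw [← Measure.map_apply (cdfR_measurable ν) hB, hmap_unif]
      exact hvol
    rw [hν, Measure.restrict_apply (cdfR_measurable ν hB)] at h1
    rw [inter_comm]
    exact h1
  -- a.e. bound for W k
  have hWb : ∀ k, ∀ᵐ x ∂π, |W k x| ≤ M := by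
    intro k
    rw [ae_iff]
    apply measure_mono_null ?_ (hnull {0} (measurableSet_singleton 0)
      (by rw [Measure.restrict_apply (measurableSet_singleton 0)]
          apply measure_mono_null inter_subset_left
          exact measure_singleton 0))
    intro x hx
    simp only [mem_setOf_eq, not_le] at hx
    constructor
    · intro hxD
      have := hatom (σ k) x hxD
      simp only [hW] at hx
      rw [Set.piecewise_eq_of_mem _ _ _ hxD] at hx
      linarith
    · simp only [mem_preimage, mem_singleton_iff]
      by_contra hc
      have hxD : x ∉ D := by
        intro hxD
        have := hatom (σ k) x hxD
        simp only [hW] at hx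
        rw [Set.piecewise_eq_of_mem _ _ _ hxD] at hx
        linarith
      have hu0 : 0 < cdfR ν x := lt_of_le_of_ne (cdfR_nonneg ν x) (Ne.symm hc)
      have hus : cdfR ν x ≤ (κ k univ).toReal := by rw [hκmass k]; exact cdfR_le_mass ν x
      have := quant_mem (κ := κ k) hM (hκup k) (hκdown k) hu0 hus
      simp only [hW] at hx
      rw [Set.piecewise_eq_of_notMem _ _ _ hxD] at hx
      have habs := abs_le.2 ⟨this.1, this.2⟩
      linarith
  -- bound for Winf
  have hWinfb : ∀ᵐ x ∂π, |Winf x| ≤ M := by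
    apply ae_of_all
    intro x
    by_cases hx : x ∈ D
    · exact (hatomconv x hx).2
    · rw [hWinf, Set.piecewise_eq_of_notMem _ _ _ hx]
      have := Qlim_mem H hM (cdfR ν x)
      exact abs_le.2 ⟨this.1, this.2⟩
  -- a.e. convergence
  have hconv : ∀ᵐ x ∂π, Tendsto (fun k => W k x) atTop (𝓝 (Winf x)) := by
    have hEc : Set.Countable ({u : ℝ | ¬ContinuousAt (Qlim H M) u} ∪ {0, s}) :=
      ((Qlim_mono H hM).countable_not_continuousAt).union (by simp)
    rw [ae_iff]
    apply measure_mono_null ?_ (hnull _ hEc.measurableSet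
      (by rw [Measure.restrict_apply hEc.measurableSet]
          apply measure_mono_null inter_subset_left
          exact hEc.measure_zero volume))
    intro x hx
    simp only [mem_setOf_eq] at hx
    constructor
    · intro hxD
      apply hx
      have h1 := (hatomconv x hxD).1
      apply h1.congr
      intro k
      simp only [hW]
      rw [Set.piecewise_eq_of_mem _ _ _ hxD]
    · simp only [mem_preimage]
      by_contra hc
      have hxD : x ∉ D := by
        intro hxD
        apply hx
        have h1 := (hatomconv x hxD).1
        apply h1.congr
        intro k
        simp only [hW]
        rw [Set.piecewise_eq_of_mem _ _ _ hxD]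
      simp only [mem_union, mem_insert_iff, mem_singleton_iff, mem_setOf_eq, not_or] at hc
      obtain ⟨hcont, h0, hsne⟩ := hc
      have hu0 : 0 < cdfR ν x := lt_of_le_of_ne (cdfR_nonneg ν x) (Ne.symm h0)
      have hus : cdfR ν x < s := lt_of_le_of_ne (cdfR_le_mass ν x) hsne
      have hcont' : ContinuousAt (Qlim H M) (cdfR ν x) := not_not.1 hcont
      have := helly_quant_tendsto (κ := κ) hM hκup hκdown hκmass hconv2 hu0 hus hcont'
      apply hx
      rw [hWinf, Set.piecewise_eq_of_notMem _ _ _ hxD]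
      apply this.congr
      intro k
      simp only [hW]
      rw [Set.piecewise_eq_of_notMem _ _ _ hxD]
  exact ⟨σ, hσmono, W, Winf, hWm, hWinfm, hlaw, hWb, hWinfb, hconv⟩

end core



open MeasureTheory Filter

/-- An order-continuous, law-invariant functional on `L^∞` over a nonatomic
probability space maps weakly convergent uniformly bounded laws to convergent
values: if `|X_n| ≤ M`, `|X₀| ≤ M` a.s. and the laws of `X_n` converge weakly
to the law of `X₀`, then `ρ(X_n) → ρ(X₀)`. -/
theorem Linfty_orderContinuous_weak_consistency
    {Ω : Type*} [MeasurableSpace Ω] (μ : Measure Ω) [IsProbabilityMeasure μ]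
    [MeasureTheory.NullSingletonClass μ]
    (ρ : (Ω → ℝ) → ℝ)
    (hlaw : ∀ X Y : Ω → ℝ, Measurable X → Measurable Y →
      (∃ C : ℝ, ∀ᵐ ω ∂μ, |X ω| ≤ C) → (∃ C : ℝ, ∀ᵐ ω ∂μ, |Y ω| ≤ C) →
      μ.map X = μ.map Y → ρ X = ρ Y)
    (hoc : ∀ (X : ℕ → Ω → ℝ) (X₀ : Ω → ℝ),
      (∀ n, Measurable (X n)) → Measurable X₀ →
      (∃ C : ℝ, (∀ᵐ ω ∂μ, |X₀ ω| ≤ C) ∧ ∀ n, ∀ᵐ ω ∂μ, |X n ω| ≤ C) →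
      (∀ᵐ ω ∂μ, Tendsto (fun n => X n ω) atTop (nhds (X₀ ω))) →
      Tendsto (fun n => ρ (X n)) atTop (nhds (ρ X₀)))
    (M : ℝ) (X : ℕ → Ω → ℝ) (X₀ : Ω → ℝ)
    (hXm : ∀ n, Measurable (X n)) (hX₀m : Measurable X₀)
    (hXb : ∀ n, ∀ᵐ ω ∂μ, |X n ω| ≤ M) (hX₀b : ∀ᵐ ω ∂μ, |X₀ ω| ≤ M)
    (hweak : ∀ f : BoundedContinuousFunction ℝ ℝ,
      Tendsto (fun n => ∫ ω, f (X n ω) ∂μ) atTop (nhds (∫ ω, f (X₀ ω) ∂μ))) :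
    Tendsto (fun n => ρ (X n)) atTop (nhds (ρ X₀)) := by
  have hM0 : 0 ≤ M := by
    haveI : (ae μ).NeBot := ae_neBot.2 (IsProbabilityMeasure.ne_zero μ)
    obtain ⟨ω, hω⟩ := hX₀b.exists
    exact le_trans (abs_nonneg _) hω
  apply tendsto_of_subseq_tendsto
  intro ns hns
  obtain ⟨ι, hι⟩ := MeasureTheory.exists_measurableEmbedding_real (ℕ → ℝ)
  set J : Ω → (ℕ → ℝ) := fun ω n => X n ω with hJ
  have hJm : Measurable J := measurable_pi_lambda _ (fun n => hXm n)
  set T : Ω → ℝ := fun ω => ι (J ω) with hT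
  have hTm : Measurable T := hι.measurable.comp hJm
  set π : Measure ℝ := μ.map T with hπ
  haveI : IsProbabilityMeasure π := Measure.isProbabilityMeasure_map hTm.aemeasurable
  obtain ⟨G, hGm, hGι⟩ := hι.exists_measurable_extend measurable_id
    (fun _ => ⟨fun _ => (0:ℝ)⟩)
  set φfun : ℕ → ℝ → ℝ := fun n t => G t n with hφfun
  have hφfunm : ∀ n, Measurable (φfun n) := fun n => (measurable_pi_apply n).comp hGm
  have hφT : ∀ n ω, φfun n (T ω) = X n ω := by
    intro n ω
    have h1 : G (ι (J ω)) = J ω := congrFun hGι (J ω)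
    simp only [hφfun, hT, h1, hJ]
    exact congrFun h1 n
  set φ' : ℕ → ℝ → ℝ := fun k => φfun (ns k) with hφ'
  have hφ'm : ∀ k, Measurable (φ' k) := fun k => hφfunm (ns k)
  have hφ'b : ∀ k, ∀ᵐ t ∂π, |φ' k t| ≤ M := by
    intro k
    have hset : MeasurableSet {t : ℝ | |φ' k t| ≤ M} := by
      have : {t : ℝ | |φ' k t| ≤ M} = (fun t => |φ' k t|) ⁻¹' (Set.Iic M) := rfl
      rw [this]
      exact (hφ'm k).abs measurableSet_Iic
    rw [hπ, ae_map_iff hTm.aemeasurable hset]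
    filter_upwards [hXb (ns k)] with ω hω
    simpa only [Set.mem_setOf_eq, hφ', hφT (ns k) ω] using hω
  obtain ⟨σ, hσ, W, Winf, hWm, hWinfm, hlawW, hWb, hWinfb, hWconv⟩ :=
    core_extraction π hM0 φ' hφ'm hφ'b
  set Z : ℕ → Ω → ℝ := fun k ω => W k (T ω) with hZ
  set Zinf : Ω → ℝ := fun ω => Winf (T ω) with hZinf
  have hZm : ∀ k, Measurable (Z k) := fun k => (hWm k).comp hTm
  have hZinfm : Measurable Zinf := hWinfm.comp hTm
  have hZlaw : ∀ k, μ.map (Z k) = μ.map (X (ns (σ k))) := by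
    intro k
    have h1 : μ.map (Z k) = π.map (W k) := by
      rw [hπ, Measure.map_map (hWm k) hTm]
      rfl
    have h2 : π.map (φ' (σ k)) = μ.map (X (ns (σ k))) := by
      rw [hπ, Measure.map_map (hφ'm (σ k)) hTm]
      congr 1
      funext ω
      exact hφT (ns (σ k)) ω
    rw [h1, hlawW k, h2]
  have hZb : ∀ k, ∀ᵐ ω ∂μ, |Z k ω| ≤ M := by
    intro k
    have := hWb k
    rw [hπ] at this
    exact ae_of_ae_map hTm.aemeasurable this
  have hZinfb : ∀ᵐ ω ∂μ, |Zinf ω| ≤ M := by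
    have := hWinfb
    rw [hπ] at this
    exact ae_of_ae_map hTm.aemeasurable this
  have hZconv : ∀ᵐ ω ∂μ, Tendsto (fun k => Z k ω) atTop (𝓝 (Zinf ω)) := by
    have := hWconv
    rw [hπ] at this
    exact ae_of_ae_map hTm.aemeasurable this
  have hρZ : ∀ k, ρ (Z k) = ρ (X (ns (σ k))) := fun k =>
    hlaw _ _ (hZm k) (hXm _) ⟨M, hZb k⟩ ⟨M, hXb _⟩ (hZlaw k)
  have hρconv : Tendsto (fun k => ρ (Z k)) atTop (𝓝 (ρ Zinf)) :=
    hoc Z Zinf hZm hZinfm ⟨M, hZinfb, hZb⟩ hZconv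
  -- identify the law of Zinf
  have hint : ∀ f : BoundedContinuousFunction ℝ ℝ, ∫ ω, f (Zinf ω) ∂μ = ∫ ω, f (X₀ ω) ∂μ := by
    intro f
    have h1 : Tendsto (fun k => ∫ ω, f (Z k ω) ∂μ) atTop (𝓝 (∫ ω, f (Zinf ω) ∂μ)) := by
      apply tendsto_integral_of_dominated_convergence (bound := fun _ => ‖f‖)
      · exact fun k => (f.continuous.measurable.comp (hZm k)).aestronglyMeasurable
      · exact integrable_const _
      · intro k
        exact ae_of_all _ (fun ω => f.norm_coe_le_norm _)
      · filter_upwards [hZconv] with ω hω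
        exact (f.continuous.tendsto _).comp hω
    have h2 : ∀ k, ∫ ω, f (Z k ω) ∂μ = ∫ ω, f (X (ns (σ k)) ω) ∂μ := by
      intro k
      have e1 : ∫ ω, f (Z k ω) ∂μ = ∫ t, f t ∂(μ.map (Z k)) :=
        (integral_map (hZm k).aemeasurable f.continuous.aestronglyMeasurable).symm
      have e2 : ∫ ω, f (X (ns (σ k)) ω) ∂μ = ∫ t, f t ∂(μ.map (X (ns (σ k)))) :=
        (integral_map (hXm _).aemeasurable f.continuous.aestronglyMeasurable).symm
      rw [e1, e2, hZlaw k]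
    have h3 : Tendsto (fun k => ∫ ω, f (X (ns (σ k)) ω) ∂μ) atTop (𝓝 (∫ ω, f (X₀ ω) ∂μ)) :=
      (hweak f).comp (hns.comp hσ.tendsto_atTop)
    have h1' : Tendsto (fun k => ∫ ω, f (X (ns (σ k)) ω) ∂μ) atTop (𝓝 (∫ ω, f (Zinf ω) ∂μ)) := by
      apply h1.congr
      intro k
      exact h2 k
    exact tendsto_nhds_unique h1' h3
  have hZinflaw : μ.map Zinf = μ.map X₀ := by
    haveI i1 : IsFiniteMeasure (μ.map Zinf) := Measure.isFiniteMeasure_map _ _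
    haveI i2 : IsFiniteMeasure (μ.map X₀) := Measure.isFiniteMeasure_map _ _
    have key : ∀ f : BoundedContinuousFunction ℝ NNReal,
        ∫⁻ x, (f x : ENNReal) ∂(μ.map Zinf) = ∫⁻ x, (f x : ENNReal) ∂(μ.map X₀) := by
      intro f
      have hfc : Continuous fun x : ℝ => ((f x : ℝ)) := NNReal.continuous_coe.comp f.continuous
      have hfb : ∃ C, ∀ x y : ℝ, dist ((f x : ℝ)) ((f y : ℝ)) ≤ C := by
        obtain ⟨C, hC⟩ := f.bounded
        exact ⟨C, fun x y => by rw [Real.dist_eq, ← NNReal.dist_eq]; exact hC x y⟩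
      set fR : BoundedContinuousFunction ℝ ℝ := ⟨⟨fun x => (f x : ℝ), hfc⟩, hfb⟩ with hfR
      have hnn : ∀ (m : Measure ℝ) [IsFiniteMeasure m],
          ∫⁻ x, (f x : ENNReal) ∂m = ENNReal.ofReal (∫ x, fR x ∂m) := by
        intro m hm
        exact lintegral_coe_eq_integral (fun x => f x) (fR.integrable m)
      rw [hnn (μ.map Zinf), hnn (μ.map X₀)]
      congr 1
      have e1 : ∫ t, fR t ∂(μ.map Zinf) = ∫ ω, fR (Zinf ω) ∂μ :=
        integral_map hZinfm.aemeasurable fR.continuous.aestronglyMeasurable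
      have e2 : ∫ t, fR t ∂(μ.map X₀) = ∫ ω, fR (X₀ ω) ∂μ :=
        integral_map hX₀m.aemeasurable fR.continuous.aestronglyMeasurable
      rw [e1, e2]
      exact hint fR
    have := FiniteMeasure.ext_of_forall_lintegral_eq
      (μ := ⟨μ.map Zinf, i1⟩) (ν := ⟨μ.map X₀, i2⟩) key
    exact congrArg FiniteMeasure.toMeasure this
  have hρinf : ρ Zinf = ρ X₀ := hlaw _ _ hZinfm hX₀m ⟨M, hZinfb⟩ ⟨M, hX₀b⟩ hZinflaw
  refine ⟨σ, ?_⟩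
  have heq : (fun k => ρ (Z k)) = fun k => ρ (X (ns (σ k))) := funext hρZ
  rw [heq, hρinf] at hρconv
  exact hρconv
end

section
/- Let φ : (0,1) → [0,∞) be nondecreasing with ∫₀¹ φ(t) dt = 1 and define the spectral risk measure ρ_φ(X) = ∫₀¹ φ(t) F_X^{-1}(t) dt. Let X be a class of random variables closed under negation on which ρ_φ is real-valued. If X_n → X a.s. with |X_n| ≤ Y a.s. for all n, where Y, −Y ∈ X (so that φ·F_Y^{-1} and φ·F_{−Y}^{-1} are integrable on (0,1)), then ρ_φ(X_n) → ρ_φ(X). -/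
open MeasureTheory Filter Topology

/-- Left quantile function `F_X⁻¹(t) = inf {x : P(X ≤ x) ≥ t}`. -/
noncomputable def leftQuantile {Ω : Type*} [MeasurableSpace Ω] (μ : Measure Ω)
    (X : Ω → ℝ) (t : ℝ) : ℝ :=
  sInf {x : ℝ | t ≤ (μ {ω | X ω ≤ x}).toReal}

/-- The spectral risk measure `ρ_φ(X) = ∫₀¹ φ(t) F_X⁻¹(t) dt`. -/
noncomputable def spectralRisk {Ω : Type*} [MeasurableSpace Ω] (μ : Measure Ω)
    (φ : ℝ → ℝ) (X : Ω → ℝ) : ℝ :=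
  ∫ t in Set.Ioo (0 : ℝ) 1, φ t * leftQuantile μ X t

section Aux

variable {Ω : Type*} [MeasurableSpace Ω] (μ : Measure Ω) [IsProbabilityMeasure μ]

/-- The cdf is monotone. -/
lemma auxF_mono (Z : Ω → ℝ) : Monotone (fun x => (μ {ω | Z ω ≤ x}).toReal) :=
  fun x y hxy => ENNReal.toReal_mono (measure_ne_top μ _)
    (measure_mono fun ω hω => le_trans hω hxy)

/-- For `t < 1` the defining set of the quantile is nonempty. -/
lemma aux_nonempty (Z : Ω → ℝ) {t : ℝ} (ht : t < 1) :
    {x : ℝ | t ≤ (μ {ω | Z ω ≤ x}).toReal}.Nonempty := by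
  have hU : (⋃ n : ℕ, {ω | Z ω ≤ (n : ℝ)}) = Set.univ := by
    ext ω
    simp only [Set.mem_iUnion, Set.mem_univ, iff_true, Set.mem_setOf_eq]
    exact exists_nat_ge (Z ω)
  have hmono : Monotone (fun n : ℕ => {ω | Z ω ≤ (n : ℝ)}) := by
    intro m n hmn ω hω
    simp only [Set.mem_setOf_eq] at hω ⊢
    exact le_trans hω (Nat.cast_le.2 hmn)
  have h1 : Tendsto (fun n : ℕ => μ {ω | Z ω ≤ (n : ℝ)}) atTop (𝓝 1) := by
    have h0 := tendsto_measure_iUnion_atTop (μ := μ) hmono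
    rw [hU, measure_univ] at h0
    exact h0
  have h2 : Tendsto (fun n : ℕ => (μ {ω | Z ω ≤ (n : ℝ)}).toReal) atTop (𝓝 1) := by
    have := (ENNReal.tendsto_toReal ENNReal.one_ne_top).comp h1
    exact this
  obtain ⟨n, hn⟩ := (h2.eventually (eventually_gt_nhds ht)).exists
  exact ⟨n, hn.le⟩

/-- For `t > 0` the defining set of the quantile is bounded below. -/
lemma aux_bddBelow {Z : Ω → ℝ} (hZ : Measurable Z) {t : ℝ} (ht : 0 < t) :
    BddBelow {x : ℝ | t ≤ (μ {ω | Z ω ≤ x}).toReal} := by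
  have hI : (⋂ n : ℕ, {ω | Z ω ≤ -(n : ℝ)}) = ∅ := by
    ext ω
    simp only [Set.mem_iInter, Set.mem_empty_iff_false, iff_false, Set.mem_setOf_eq, not_forall]
    obtain ⟨n, hn⟩ := exists_nat_gt (-(Z ω))
    exact ⟨n, by push_neg; linarith⟩
  have hanti : Antitone (fun n : ℕ => {ω | Z ω ≤ -(n : ℝ)}) := by
    intro m n hmn ω hω
    simp only [Set.mem_setOf_eq] at hω ⊢
    exact le_trans hω (neg_le_neg (Nat.cast_le.2 hmn))
  have h1 : Tendsto (fun n : ℕ => μ {ω | Z ω ≤ -(n : ℝ)}) atTop (𝓝 0) := by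
    have h0 := tendsto_measure_iInter_atTop (μ := μ)
      (s := fun n : ℕ => {ω | Z ω ≤ -(n : ℝ)})
      (fun n => (hZ measurableSet_Iic).nullMeasurableSet) hanti ⟨0, measure_ne_top μ _⟩
    rw [hI, measure_empty] at h0
    exact h0
  have h2 : Tendsto (fun n : ℕ => (μ {ω | Z ω ≤ -(n : ℝ)}).toReal) atTop (𝓝 0) := by
    have := (ENNReal.tendsto_toReal ENNReal.zero_ne_top).comp h1
    exact this
  obtain ⟨n, hn⟩ := (h2.eventually (eventually_lt_nhds ht)).exists
  refine ⟨-(n : ℝ), fun y hy => ?_⟩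
  by_contra h
  push_neg at h
  have := auxF_mono μ Z h.le
  simp only [Set.mem_setOf_eq] at hy
  linarith

lemma leftQuantile_le {Z : Ω → ℝ} (hZ : Measurable Z) {t x : ℝ} (ht : 0 < t)
    (hx : t ≤ (μ {ω | Z ω ≤ x}).toReal) : leftQuantile μ Z t ≤ x :=
  csInf_le (aux_bddBelow μ hZ ht) hx

lemma le_leftQuantile {Z : Ω → ℝ} {t x : ℝ} (ht : t < 1)
    (hx : (μ {ω | Z ω ≤ x}).toReal < t) : x ≤ leftQuantile μ Z t := by
  refine le_csInf (aux_nonempty μ Z ht) fun y hy => ?_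
  by_contra h
  push_neg at h
  simp only [Set.mem_setOf_eq] at hy
  have := auxF_mono μ Z h.le
  linarith

/-- The quantile function is monotone on `(0,1)`. -/
lemma leftQuantile_monotoneOn {Z : Ω → ℝ} (hZ : Measurable Z) :
    MonotoneOn (leftQuantile μ Z) (Set.Ioo (0 : ℝ) 1) := fun t₁ h₁ t₂ h₂ h12 =>
  csInf_le_csInf (aux_bddBelow μ hZ h₁.1) (aux_nonempty μ Z h₂.2)
    (fun x hx => le_trans h12 hx)

/-- Quantiles are monotone with respect to a.e. domination. -/
lemma leftQuantile_mono_ae {W Z : Ω → ℝ} (hW : Measurable W) (h : ∀ᵐ ω ∂μ, W ω ≤ Z ω)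
    {t : ℝ} (ht : t ∈ Set.Ioo (0 : ℝ) 1) : leftQuantile μ W t ≤ leftQuantile μ Z t := by
  refine csInf_le_csInf (aux_bddBelow μ hW ht.1) (aux_nonempty μ Z ht.2) fun x hx => ?_
  refine le_trans hx (ENNReal.toReal_mono (measure_ne_top μ _) (measure_mono_ae ?_))
  filter_upwards [h] with ω hω hZx
  exact le_trans hω hZx

/-- Convergence of cdfs at non-atoms of the a.s. limit. -/
lemma cdf_tendsto {X : ℕ → Ω → ℝ} {X₀ : Ω → ℝ} (hXm : ∀ n, Measurable (X n))
    (hX₀m : Measurable X₀)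
    (has : ∀ᵐ ω ∂μ, Tendsto (fun n => X n ω) atTop (𝓝 (X₀ ω)))
    {x : ℝ} (hx : μ {ω | X₀ ω = x} = 0) :
    Tendsto (fun n => (μ {ω | X n ω ≤ x}).toReal) atTop
      (𝓝 ((μ {ω | X₀ ω ≤ x}).toReal)) := by
  have hne : ∀ᵐ ω ∂μ, X₀ ω ≠ x := measure_eq_zero_iff_ae_notMem.1 hx
  have key : Tendsto (fun n => ∫ ω, ({ω | X n ω ≤ x}).indicator (1 : Ω → ℝ) ω ∂μ)
      atTop (𝓝 (∫ ω, ({ω | X₀ ω ≤ x}).indicator (1 : Ω → ℝ) ω ∂μ)) := by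
    apply tendsto_integral_of_dominated_convergence (fun _ => (1 : ℝ))
    · intro n
      exact (measurable_one.indicator ((hXm n) measurableSet_Iic)).aestronglyMeasurable
    · exact integrable_const 1
    · intro n
      filter_upwards with ω
      rw [Real.norm_eq_abs]
      by_cases h : ω ∈ {ω | X n ω ≤ x} <;> simp [Set.indicator_apply, h]
    · filter_upwards [has, hne] with ω hten hne'
      rcases lt_or_gt_of_ne hne' with hlt | hgt
      · have h1 : ∀ᶠ n in atTop, X n ω ≤ x :=
          (hten.eventually (eventually_lt_nhds hlt)).mono fun n hn => hn.le
        have h2 : ({ω | X₀ ω ≤ x}).indicator (1 : Ω → ℝ) ω = 1 :=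
          Set.indicator_of_mem (show ω ∈ {ω' | X₀ ω' ≤ x} from hlt.le) _
        rw [h2]
        exact tendsto_const_nhds.congr' (h1.mono fun n hn =>
          (Set.indicator_of_mem (show ω ∈ {ω' | X n ω' ≤ x} from hn) _).symm)
      · have h1 : ∀ᶠ n in atTop, ¬ X n ω ≤ x :=
          (hten.eventually (eventually_gt_nhds hgt)).mono fun n hn => not_le.2 hn
        have h2 : ({ω | X₀ ω ≤ x}).indicator (1 : Ω → ℝ) ω = 0 :=
          Set.indicator_of_notMem (show ω ∉ {ω' | X₀ ω' ≤ x} from not_le.2 hgt) _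
        rw [h2]
        exact tendsto_const_nhds.congr' (h1.mono fun n hn =>
          (Set.indicator_of_notMem (show ω ∉ {ω' | X n ω' ≤ x} from hn) _).symm)
  have e : ∀ (Z : Ω → ℝ), Measurable Z →
      ∫ ω, ({ω | Z ω ≤ x}).indicator (1 : Ω → ℝ) ω ∂μ = (μ {ω | Z ω ≤ x}).toReal :=
    fun Z hZ => integral_indicator_one (hZ measurableSet_Iic)
  have := key
  rw [e X₀ hX₀m] at this
  exact this.congr fun n => e (X n) (hXm n)

/-- Convergence of quantiles at points of continuity of the limiting quantile function. -/
lemma quantile_tendsto {X : ℕ → Ω → ℝ} {X₀ : Ω → ℝ} (hXm : ∀ n, Measurable (X n))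
    (hX₀m : Measurable X₀)
    (has : ∀ᵐ ω ∂μ, Tendsto (fun n => X n ω) atTop (𝓝 (X₀ ω)))
    {t : ℝ} (ht : t ∈ Set.Ioo (0 : ℝ) 1)
    (hcont : ContinuousAt (leftQuantile μ X₀) t) :
    Tendsto (fun n => leftQuantile μ (X n) t) atTop (𝓝 (leftQuantile μ X₀ t)) := by
  have hfind : ∀ a b : ℝ, a < b → ∃ x, x ∈ Set.Ioo a b ∧ μ {ω | X₀ ω = x} = 0 := by
    intro a b hab
    have hDc : {x : ℝ | 0 < μ {ω | X₀ ω = x}}.Countable :=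
      Measure.countable_meas_level_set_pos hX₀m
    have h1 : ¬ (Set.Ioo a b ⊆ {x : ℝ | 0 < μ {ω | X₀ ω = x}}) := by
      intro hsub
      have hc : (Set.Ioo a b).Countable := hDc.mono hsub
      have hv := hc.measure_zero volume
      rw [Real.volume_Ioo] at hv
      simp only [ENNReal.ofReal_eq_zero] at hv
      linarith
    obtain ⟨x, hx1, hx2⟩ := Set.not_subset.1 h1
    refine ⟨x, hx1, ?_⟩
    simpa [pos_iff_ne_zero] using hx2
  rw [tendsto_order]
  constructor
  · -- lower bound
    intro b hb
    have h1 : ∀ᶠ s in 𝓝 t, b < leftQuantile μ X₀ s := hcont.eventually (eventually_gt_nhds hb)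
    have h2 : ∀ᶠ s in 𝓝 t, s ∈ Set.Ioo (0 : ℝ) 1 :=
      eventually_mem_set.2 (Ioo_mem_nhds ht.1 ht.2)
    have h3 : ∀ᶠ s in 𝓝[<] t, (b < leftQuantile μ X₀ s ∧ s ∈ Set.Ioo (0 : ℝ) 1) ∧ s < t :=
      (((h1.and h2).filter_mono nhdsWithin_le_nhds).and
        (eventually_mem_set.2 self_mem_nhdsWithin))
    obtain ⟨s, ⟨hbs, hs01⟩, hst⟩ := h3.exists
    obtain ⟨x, hx_mem, hx_atom⟩ := hfind b (leftQuantile μ X₀ s) hbs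
    have hFx : (μ {ω | X₀ ω ≤ x}).toReal < s := by
      by_contra h
      push_neg at h
      exact absurd (leftQuantile_le μ hX₀m hs01.1 h) (not_le.2 hx_mem.2)
    have hc := cdf_tendsto μ hXm hX₀m has hx_atom
    have hev : ∀ᶠ n in atTop, (μ {ω | X n ω ≤ x}).toReal < t :=
      hc.eventually (eventually_lt_nhds (lt_trans hFx hst))
    filter_upwards [hev] with n hn
    exact lt_of_lt_of_le hx_mem.1 (le_leftQuantile μ ht.2 hn)
  · -- upper bound
    intro b hb
    have h1 : ∀ᶠ s in 𝓝 t, leftQuantile μ X₀ s < b := hcont.eventually (eventually_lt_nhds hb)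
    have h2 : ∀ᶠ s in 𝓝 t, s ∈ Set.Ioo (0 : ℝ) 1 :=
      eventually_mem_set.2 (Ioo_mem_nhds ht.1 ht.2)
    have h3 : ∀ᶠ s in 𝓝[>] t, (leftQuantile μ X₀ s < b ∧ s ∈ Set.Ioo (0 : ℝ) 1) ∧ t < s :=
      (((h1.and h2).filter_mono nhdsWithin_le_nhds).and
        (eventually_mem_set.2 self_mem_nhdsWithin))
    obtain ⟨s, ⟨hsb, hs01⟩, hts⟩ := h3.exists
    obtain ⟨x, hx_mem, hx_atom⟩ := hfind (leftQuantile μ X₀ s) b hsb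
    obtain ⟨y, hy, hyx⟩ := exists_lt_of_csInf_lt (aux_nonempty μ X₀ hs01.2) hx_mem.1
    simp only [Set.mem_setOf_eq] at hy
    have hFx : t < (μ {ω | X₀ ω ≤ x}).toReal :=
      lt_of_lt_of_le hts (le_trans hy (auxF_mono μ X₀ hyx.le))
    have hc := cdf_tendsto μ hXm hX₀m has hx_atom
    have hev : ∀ᶠ n in atTop, t < (μ {ω | X n ω ≤ x}).toReal :=
      hc.eventually (eventually_gt_nhds hFx)
    filter_upwards [hev] with n hn
    exact lt_of_le_of_lt (leftQuantile_le μ (hXm n) ht.1 hn.le) hx_mem.2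

/-- The set of discontinuity points of the quantile function inside `(0,1)` is countable. -/
lemma quantile_countable_discont {Z : Ω → ℝ} (hZ : Measurable Z) :
    {t | t ∈ Set.Ioo (0 : ℝ) 1 ∧ ¬ ContinuousAt (leftQuantile μ Z) t}.Countable := by
  set q := leftQuantile μ Z with hq
  have hmono := leftQuantile_monotoneOn μ hZ
  have key : ∀ k : ℕ,
      {t | t ∈ Set.Ioo (1 / (k + 2) : ℝ) (1 - 1 / (k + 2)) ∧ ¬ ContinuousAt q t}.Countable := by
    intro k
    set a : ℝ := 1 / (k + 2) with ha
    set b : ℝ := 1 - 1 / (k + 2) with hb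
    have hk2 : (0 : ℝ) < k + 2 := by positivity
    have ha0 : 0 < a := by positivity
    have ha1 : a ≤ 1 := by
      rw [ha, div_le_one hk2]
      linarith [Nat.cast_nonneg (α := ℝ) k]
    have hb1 : b < 1 := by rw [hb]; linarith
    rcases le_or_gt b a with hba | hab
    · refine Set.Countable.mono ?_ Set.countable_empty
      rintro t ⟨ht, -⟩
      exact absurd (lt_trans ht.1 ht.2) (not_lt.2 hba)
    · have hsub : Set.Icc a b ⊆ Set.Ioo (0 : ℝ) 1 := fun x hx =>
        ⟨lt_of_lt_of_le ha0 hx.1, lt_of_le_of_lt hx.2 hb1⟩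
      set g : ℝ → ℝ := fun t => q (max a (min t b)) with hg
      have hclamp : ∀ t, max a (min t b) ∈ Set.Icc a b := fun t =>
        ⟨le_max_left _ _, max_le hab.le (min_le_right _ _)⟩
      have hgmono : Monotone g := fun s t hst =>
        hmono (hsub (hclamp s)) (hsub (hclamp t))
          (max_le_max le_rfl (min_le_min hst le_rfl))
      have hsubset : {t | t ∈ Set.Ioo a b ∧ ¬ ContinuousAt q t} ⊆
          {t | ¬ ContinuousAt g t} := by
        rintro t ⟨ht, hqc⟩
        intro hgc
        apply hqc
        have heq : g =ᶠ[𝓝 t] q := by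
          filter_upwards [eventually_mem_set.2 (Ioo_mem_nhds ht.1 ht.2)] with s hs
          rw [hg]
          simp only
          rw [min_eq_left hs.2.le, max_eq_right hs.1.le]
        exact hgc.congr heq
      exact (hgmono.countable_not_continuousAt).mono hsubset
  refine Set.Countable.mono ?_ (Set.countable_iUnion key)
  rintro t ⟨ht, hqc⟩
  have hm : 0 < min t (1 - t) := lt_min ht.1 (by linarith [ht.2])
  obtain ⟨k, hk⟩ := exists_nat_gt (1 / min t (1 - t))
  have hk' : 1 / ((k : ℝ) + 2) < min t (1 - t) := by
    rw [div_lt_iff₀ (by positivity)]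
    have h1 : 1 / min t (1 - t) < (k : ℝ) := hk
    have h2 : 1 < min t (1 - t) * k := by
      rw [div_lt_iff₀ hm] at h1
      linarith
    nlinarith [hm.le, Nat.cast_nonneg (α := ℝ) k]
  refine Set.mem_iUnion.2 ⟨k, ⟨⟨lt_of_lt_of_le hk' (min_le_left _ _), ?_⟩, hqc⟩⟩
  have := lt_of_lt_of_le hk' (min_le_right _ _)
  linarith

end Aux

/-- Spectral risk measures are order continuous: if `X_n → X` a.s. with
`|X_n| ≤ Y` a.s. where `φ·F_Y⁻¹` and `φ·F_{-Y}⁻¹` are integrable on `(0,1)`,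
then `ρ_φ(X_n) → ρ_φ(X)`. -/
theorem spectralRisk_orderContinuous
    {Ω : Type*} [MeasurableSpace Ω] (μ : Measure Ω) [IsProbabilityMeasure μ]
    (φ : ℝ → ℝ) (hφmono : MonotoneOn φ (Set.Ioo (0 : ℝ) 1))
    (hφpos : ∀ t ∈ Set.Ioo (0 : ℝ) 1, 0 ≤ φ t)
    (hφint : ∫ t in Set.Ioo (0 : ℝ) 1, φ t = 1)
    (X : ℕ → Ω → ℝ) (X₀ : Ω → ℝ) (Y : Ω → ℝ)
    (hXm : ∀ n, Measurable (X n)) (hX₀m : Measurable X₀) (hYm : Measurable Y)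
    (hYint : IntegrableOn (fun t => φ t * leftQuantile μ Y t) (Set.Ioo (0 : ℝ) 1))
    (hnegYint : IntegrableOn (fun t => φ t * leftQuantile μ (fun ω => -Y ω) t)
      (Set.Ioo (0 : ℝ) 1))
    (hdom : ∀ n, ∀ᵐ ω ∂μ, |X n ω| ≤ Y ω)
    (has : ∀ᵐ ω ∂μ, Tendsto (fun n => X n ω) atTop (nhds (X₀ ω))) :
    Tendsto (fun n => spectralRisk μ φ (X n)) atTop
      (nhds (spectralRisk μ φ X₀)) := by
  simp only [spectralRisk]
  apply tendsto_integral_of_dominated_convergence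
    (fun t => |φ t * leftQuantile μ Y t| + |φ t * leftQuantile μ (fun ω => -Y ω) t|)
  · intro n
    exact ((aemeasurable_restrict_of_monotoneOn measurableSet_Ioo hφmono).mul
      (aemeasurable_restrict_of_monotoneOn measurableSet_Ioo
        (leftQuantile_monotoneOn μ (hXm n)))).aestronglyMeasurable
  · exact hYint.abs.add hnegYint.abs
  · intro n
    rw [ae_restrict_iff' measurableSet_Ioo]
    filter_upwards with t ht
    have hupper : ∀ᵐ ω ∂μ, X n ω ≤ Y ω := by
      filter_upwards [hdom n] with ω hω
      exact (abs_le.1 hω).2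
    have hlower : ∀ᵐ ω ∂μ, -Y ω ≤ X n ω := by
      filter_upwards [hdom n] with ω hω
      exact (abs_le.1 hω).1
    have h1 : leftQuantile μ (fun ω => -Y ω) t ≤ leftQuantile μ (X n) t :=
      leftQuantile_mono_ae μ hYm.neg hlower ht
    have h2 : leftQuantile μ (X n) t ≤ leftQuantile μ Y t :=
      leftQuantile_mono_ae μ (hXm n) hupper ht
    have hφt := hφpos t ht
    rw [Real.norm_eq_abs, abs_mul, abs_mul, abs_mul, abs_of_nonneg hφt]
    have habs : |leftQuantile μ (X n) t| ≤
        |leftQuantile μ Y t| + |leftQuantile μ (fun ω => -Y ω) t| := by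
      rw [abs_le]
      constructor
      · have := neg_abs_le (leftQuantile μ (fun ω => -Y ω) t)
        have := abs_nonneg (leftQuantile μ Y t)
        linarith
      · have := le_abs_self (leftQuantile μ Y t)
        have := abs_nonneg (leftQuantile μ (fun ω => -Y ω) t)
        linarith
    calc φ t * |leftQuantile μ (X n) t|
        ≤ φ t * (|leftQuantile μ Y t| + |leftQuantile μ (fun ω => -Y ω) t|) :=
          mul_le_mul_of_nonneg_left habs hφt
      _ = φ t * |leftQuantile μ Y t| + φ t * |leftQuantile μ (fun ω => -Y ω) t| := by ring
  · rw [ae_restrict_iff' measurableSet_Ioo]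
    have hN : ∀ᵐ t ∂(volume : Measure ℝ),
        t ∉ {t | t ∈ Set.Ioo (0 : ℝ) 1 ∧ ¬ ContinuousAt (leftQuantile μ X₀) t} :=
      measure_eq_zero_iff_ae_notMem.1 ((quantile_countable_discont μ hX₀m).measure_zero _)
    filter_upwards [hN] with t htbad htIoo
    have hcont : ContinuousAt (leftQuantile μ X₀) t := by
      by_contra h
      exact htbad ⟨htIoo, h⟩
    exact (quantile_tendsto μ hXm hX₀m has htIoo hcont).const_mul (φ t)
end
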